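/- arXiv:2311.14251 — 2 statements merged into one kernel-verified Lean document; each statement's English description precedes it below -/
import Mathlib

section
/- Let P, Q be binary-input DMCs with finite output alphabets whose conditional output distributions P_0, P_1 and Q_0, Q_1 each have a common support point, let p_min be the smallest nonzero transition probability among P and Q, and let s* ∈ [0,1/2] be a maximizer of E_s satisfying d_C(P_0,P_1,s*) ≥ d_C(P_0,P_1,1−s*) and d_C(Q_0,Q_1,s*) ≥ d_C(Q_0,Q_1,1−s*). Fix a deterministic n-step 2-hop protocol with decoding regions D_0, D_1, let w⃗_1(∅) ∈ {0,1}^n be a relay input string minimizing Q^n(D_0 | ·), and let w⃗_1^c(∅) be its bit-wise complement. If the functions s ↦ d_C(w⃗_1^c(∅), w⃗_1(∅), Q^n, s) and s ↦ d_C(Q_0,Q_1,s) are non-constant, concave with unique maximizers, and of weakly opposite type with respect to s*, then −log(p_{e,0} + p_{e,1}) ≤ n·d_C(Q_0,Q_1,s*) + √(2n)·log(1/p_min) + log 4. -/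
open scoped BigOperators
open Finset

noncomputable section

/-- A probability mass function on a finite type, given as a real-valued function. -/
def IsPMF {α : Type*} [Fintype α] (p : α → ℝ) : Prop :=
  (∀ x, 0 ≤ p x) ∧ ∑ x, p x = 1

/-- A discrete memoryless channel: every input symbol yields a PMF on outputs. -/
def IsChannel {X Y : Type*} [Fintype Y] (P : X → Y → ℝ) : Prop :=
  ∀ x, IsPMF (P x)

/-- The Chernoff sum `Σ_x p(x)^{1-s} q(x)^s`, with terms where `p` or `q` vanish removed;
this realizes the continuous extension to the endpoints `s ∈ {0,1}`. -/
def cherSum {α : Type*} [Fintype α] (p q : α → ℝ) (s : ℝ) : ℝ :=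
  ∑ x, if p x = 0 ∨ q x = 0 then 0 else p x ^ (1 - s) * q x ^ s

/-- The Chernoff divergence `d_C(p, q, s)`. -/
def dC {α : Type*} [Fintype α] (p q : α → ℝ) (s : ℝ) : ℝ :=
  - Real.log (cherSum p q s)

/-- First derivative of the Chernoff divergence with respect to `s`. -/
def dC' {α : Type*} [Fintype α] (p q : α → ℝ) (s : ℝ) : ℝ :=
  deriv (dC p q) s

/-- Second derivative of the Chernoff divergence with respect to `s`. -/
def dC'' {α : Type*} [Fintype α] (p q : α → ℝ) (s : ℝ) : ℝ :=
  deriv (deriv (dC p q)) s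

/-- The tilted distribution `Q_s`. -/
def tilted {α : Type*} [Fintype α] (p q : α → ℝ) (s : ℝ) (x : α) : ℝ :=
  (if p x = 0 ∨ q x = 0 then 0 else p x ^ (1 - s) * q x ^ s) / cherSum p q s

/-- Kullback–Leibler divergence (natural log), with the convention `0 log 0 = 0`. -/
def KLdiv {α : Type*} [Fintype α] (p q : α → ℝ) : ℝ :=
  ∑ x, if p x = 0 then 0 else p x * Real.log (p x / q x)

/-- Product (memoryless) output distribution of a channel given an input string. -/
def prodDist {X Y : Type*} [Fintype Y] {n : ℕ} (P : X → Y → ℝ) (w : Fin n → X) :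
    (Fin n → Y) → ℝ :=
  fun y => ∏ i, P (w i) (y i)

/-- Two distributions have a common support point. -/
def CommonSupport {α : Type*} (p q : α → ℝ) : Prop :=
  ∃ x, p x ≠ 0 ∧ q x ≠ 0

/-- `pmin` is the smallest nonzero transition probability of the channel `Q`. -/
def MinTransChan {X Y : Type*} (Q : X → Y → ℝ) (pmin : ℝ) : Prop :=
  0 < pmin ∧ (∃ x y, Q x y = pmin) ∧ ∀ x y, Q x y ≠ 0 → pmin ≤ Q x y

/-- `pmin` is the smallest nonzero transition probability among the channels `P` and `Q`. -/
def MinTransPair {Y Z : Type*} (P : Bool → Y → ℝ) (Q : Bool → Z → ℝ) (pmin : ℝ) : Prop :=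
  0 < pmin ∧ ((∃ b y, P b y = pmin) ∨ (∃ b z, Q b z = pmin)) ∧
    (∀ b y, P b y ≠ 0 → pmin ≤ P b y) ∧ ∀ b z, Q b z ≠ 0 → pmin ≤ Q b z

/-- `pmin` is the smallest nonzero probability among the values of two distributions. -/
def MinProbPair {α : Type*} (p q : α → ℝ) (pmin : ℝ) : Prop :=
  0 < pmin ∧ ((∃ x, p x = pmin) ∨ (∃ x, q x = pmin)) ∧
    (∀ x, p x ≠ 0 → pmin ≤ p x) ∧ ∀ x, q x ≠ 0 → pmin ≤ q x

/-- A deterministic `n`-step 2-hop protocol: codewords `x false = x⃗₀`, `x true = x⃗₁`,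
relay maps (the `i`-th transmission may depend only on the previously received symbols),
and a decoder. -/
structure DetProtocol (Y Z : Type*) (n : ℕ) where
  x : Bool → Fin n → Bool
  relay : (i : Fin n) → (Fin i → Y) → Bool
  dec : (Fin n → Z) → Bool

/-- The relay transmissions `W_1, …, W_n` determined by the received sequence `y`. -/
def DetProtocol.W {Y Z : Type*} {n : ℕ} (π : DetProtocol Y Z n) (y : Fin n → Y)
    (i : Fin n) : Bool :=
  π.relay i (fun j => y (Fin.castLE i.isLt.le j))

/-- `errProb P Q π b` is the conditional error probability `ℙ(Θ̂ = ¬b ∣ Θ = b)`. -/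
def errProb {Y Z : Type*} [Fintype Y] [Fintype Z] {n : ℕ}
    (P : Bool → Y → ℝ) (Q : Bool → Z → ℝ) (π : DetProtocol Y Z n) (b : Bool) : ℝ :=
  ∑ y : Fin n → Y, ∑ z : Fin n → Z,
    prodDist P (π.x b) y * prodDist Q (π.W y) z *
      (if π.dec z = !b then 1 else 0)

/-- Probability (given `Θ = b`) that the relay receives the prefix `ypre` in the
first `k` time steps. -/
def prefixProb {Y Z : Type*} [Fintype Y] {n : ℕ} (P : Bool → Y → ℝ)
    (π : DetProtocol Y Z n) (b : Bool) {k : ℕ} (hk : k ≤ n) (ypre : Fin k → Y) : ℝ :=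
  ∏ i : Fin k, P (π.x b (Fin.castLE hk i)) (ypre i)

/-- `errGiven P Q π b hk ypre` is the conditional error probability `p_{e,b}(y_{1…k})`:
the probability that `Θ̂ = ¬b` given `Θ = b` and that the relay receives `ypre` in the
first `k` time steps. -/
def errGiven {Y Z : Type*} [Fintype Y] [Fintype Z] {n : ℕ}
    (P : Bool → Y → ℝ) (Q : Bool → Z → ℝ) (π : DetProtocol Y Z n) (b : Bool)
    {k : ℕ} (hk : k ≤ n) (ypre : Fin k → Y) : ℝ :=
  (∑ y : Fin n → Y, ∑ z : Fin n → Z,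
      Set.indicator {y' : Fin n → Y | ∀ i : Fin k, y' (Fin.castLE hk i) = ypre i}
          (fun _ => (1 : ℝ)) y *
        prodDist P (π.x b) y * prodDist Q (π.W y) z *
        (if π.dec z = !b then 1 else 0)) /
    prefixProb P π b hk ypre

/-- The first `k` relay transmissions `w⃗(y_{1…k})`, determined by the first `k`
received symbols. -/
def relayPrefix {Y Z : Type*} {n : ℕ} (π : DetProtocol Y Z n) {k : ℕ} (hk : k ≤ n)
    (ypre : Fin k → Y) (i : Fin k) : Bool :=
  π.relay (Fin.castLE hk i) (fun j => ypre (Fin.castLE i.isLt.le j))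

/-- Probability that the decoder outputs `b` when the relay input string is `w`. -/
def decProb {Z : Type*} [Fintype Z] {n : ℕ} (Q : Bool → Z → ℝ)
    (dec : (Fin n → Z) → Bool) (b : Bool) (w : Fin n → Bool) : ℝ :=
  ∑ z : Fin n → Z, prodDist Q w z * (if dec z = b then 1 else 0)

/-- `w` extends the relay's first `k` transmissions (after receiving `ypre`) to length `n`,
minimizing the probability that the decoder outputs `b`, i.e. `w = w⃗_{1-b}(y_{1…k})`. -/
def IsBestExtension {Y Z : Type*} [Fintype Z] {n : ℕ} (Q : Bool → Z → ℝ)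
    (π : DetProtocol Y Z n) (b : Bool) {k : ℕ} (hk : k ≤ n) (ypre : Fin k → Y)
    (w : Fin n → Bool) : Prop :=
  (∀ i : Fin k, w (Fin.castLE hk i) = relayPrefix π hk ypre i) ∧
    ∀ w' : Fin n → Bool,
      (∀ i : Fin k, w' (Fin.castLE hk i) = relayPrefix π hk ypre i) →
        decProb Q π.dec b w ≤ decProb Q π.dec b w'

/-- A randomized `n`-step 2-hop protocol: a finite collection of deterministic
protocols together with a probability distribution (the shared private randomness). -/
structure RandProtocol (Y Z : Type*) (n : ℕ) where
  m : ℕ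
  ρ : Fin m → ℝ
  det : Fin m → DetProtocol Y Z n

/-- Validity of the randomness distribution of a randomized protocol. -/
def RandProtocol.Valid {Y Z : Type*} {n : ℕ} (π : RandProtocol Y Z n) : Prop :=
  (∀ r, 0 ≤ π.ρ r) ∧ ∑ r, π.ρ r = 1

/-- Overall error probability `ℙ(Θ̂ ≠ Θ)` of a randomized protocol, with `Θ` uniform. -/
def randPe {Y Z : Type*} [Fintype Y] [Fintype Z] {n : ℕ}
    (P : Bool → Y → ℝ) (Q : Bool → Z → ℝ) (π : RandProtocol Y Z n) : ℝ :=
  ∑ r, π.ρ r * ((errProb P Q (π.det r) false + errProb P Q (π.det r) true) / 2)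

/-- The 2-hop error exponent `E(P,Q)`: the supremum, over sequences of (randomized)
protocols, of the liminf of `-(1/n) log P_e(n,P,Q)`. -/
def twoHopExponent {Y Z : Type*} [Fintype Y] [Fintype Z]
    (P : Bool → Y → ℝ) (Q : Bool → Z → ℝ) : ℝ :=
  sSup { E | ∃ π : (n : ℕ) → RandProtocol Y Z n, (∀ n, (π n).Valid) ∧
    E = Filter.liminf (fun n : ℕ => -(1 / (n : ℝ)) * Real.log (randPe P Q (π n)))
          Filter.atTop }

/-- `m` is the unique global maximizer of `g` on `[0,1]`. -/
def UniqueArgmax (g : ℝ → ℝ) (m : ℝ) : Prop :=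
  m ∈ Set.Icc (0 : ℝ) 1 ∧ ∀ s ∈ Set.Icc (0 : ℝ) 1, s ≠ m → g s < g m

/-- `g` is skewed with respect to `s*`. -/
def SkewedFun (sStar : ℝ) (g : ℝ → ℝ) : Prop :=
  ∃ m, UniqueArgmax g m ∧ (m < sStar ∨ 1 - sStar < m)

/-- `g` is balanced with respect to `s*`. -/
def BalancedFun (sStar : ℝ) (g : ℝ → ℝ) : Prop :=
  ∃ m, UniqueArgmax g m ∧ sStar < m ∧ m < 1 - sStar

/-- `g` is neutral with respect to `s*`. -/
def NeutralFun (sStar : ℝ) (g : ℝ → ℝ) : Prop :=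
  ∃ m, UniqueArgmax g m ∧ (m = sStar ∨ m = 1 - sStar)

/-- `g` and `h` are of strictly opposite type w.r.t. `s*`. -/
def StrictlyOppositeType (sStar : ℝ) (g h : ℝ → ℝ) : Prop :=
  (SkewedFun sStar g ∧ BalancedFun sStar h) ∨ (BalancedFun sStar g ∧ SkewedFun sStar h)

/-- `g` and `h` are of weakly opposite type w.r.t. `s*`. -/
def WeaklyOppositeType (sStar : ℝ) (g h : ℝ → ℝ) : Prop :=
  ((SkewedFun sStar g ∨ NeutralFun sStar g) ∧ (BalancedFun sStar h ∨ NeutralFun sStar h)) ∨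
    ((BalancedFun sStar g ∨ NeutralFun sStar g) ∧ (SkewedFun sStar h ∨ NeutralFun sStar h))

/-- `g` is non-constant on `[0,1]`. -/
def NonConstantOn (g : ℝ → ℝ) : Prop :=
  ∃ s₁ ∈ Set.Icc (0 : ℝ) 1, ∃ s₂ ∈ Set.Icc (0 : ℝ) 1, g s₁ ≠ g s₂

/-- The quantity `E_s` from the paper. -/
def Efun {Y Z : Type*} [Fintype Y] [Fintype Z]
    (P : Bool → Y → ℝ) (Q : Bool → Z → ℝ) (s : ℝ) : ℝ :=
  min (max (dC (P false) (P true) s) (dC (P false) (P true) (1 - s)))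
      (max (dC (Q false) (Q true) s) (dC (Q false) (Q true) (1 - s)))


section aux

variable {α : Type*} [Fintype α]

lemma IsPMF.le_one {p : α → ℝ} (hp : IsPMF p) (x : α) : p x ≤ 1 := by
  rw [← hp.2]
  exact Finset.single_le_sum (fun i _ => hp.1 i) (mem_univ x)

lemma IsPMF.exists_ne_zero {p : α → ℝ} (hp : IsPMF p) : ∃ x, p x ≠ 0 := by
  by_contra h
  push_neg at h
  have : (∑ x, p x) = 0 := Finset.sum_eq_zero fun x _ => h x
  rw [hp.2] at this; norm_num at this

lemma cherSum_nonneg {p q : α → ℝ} (hp : ∀ x, 0 ≤ p x) (hq : ∀ x, 0 ≤ q x) (s : ℝ) :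
    0 ≤ cherSum p q s := by
  refine Finset.sum_nonneg fun x _ => ?_
  by_cases h : p x = 0 ∨ q x = 0
  · simp [h]
  · simp only [h, if_false]
    exact mul_nonneg (Real.rpow_nonneg (hp x) _) (Real.rpow_nonneg (hq x) _)

lemma cherSum_pos {p q : α → ℝ} (hp : ∀ x, 0 ≤ p x) (hq : ∀ x, 0 ≤ q x)
    (h : CommonSupport p q) (s : ℝ) : 0 < cherSum p q s := by
  obtain ⟨x₀, hx₀p, hx₀q⟩ := h
  refine Finset.sum_pos' (fun x _ => ?_) ⟨x₀, mem_univ _, ?_⟩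
  · by_cases h : p x = 0 ∨ q x = 0
    · simp [h]
    · simp only [h, if_false]
      exact mul_nonneg (Real.rpow_nonneg (hp x) _) (Real.rpow_nonneg (hq x) _)
  · simp only [hx₀p, hx₀q, or_self, if_false]
    exact mul_pos (Real.rpow_pos_of_pos ((hp x₀).lt_of_ne (Ne.symm hx₀p)) _)
      (Real.rpow_pos_of_pos ((hq x₀).lt_of_ne (Ne.symm hx₀q)) _)

lemma cherSum_le_one {p q : α → ℝ} (hp : IsPMF p) (hq : IsPMF q) {s : ℝ}
    (hs0 : 0 ≤ s) (hs1 : s ≤ 1) : cherSum p q s ≤ 1 := by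
  have key : ∀ x, (if p x = 0 ∨ q x = 0 then (0:ℝ) else p x ^ (1 - s) * q x ^ s)
      ≤ (1 - s) * p x + s * q x := by
    intro x
    by_cases h : p x = 0 ∨ q x = 0
    · simp only [h, if_true]
      exact add_nonneg (mul_nonneg (by linarith) (hp.1 x)) (mul_nonneg hs0 (hq.1 x))
    · simp only [h, if_false]
      exact Real.geom_mean_le_arith_mean2_weighted (by linarith) hs0 (hp.1 x) (hq.1 x)
        (by ring)
  calc cherSum p q s ≤ ∑ x, ((1 - s) * p x + s * q x) :=
        Finset.sum_le_sum fun x _ => key x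
    _ = 1 := by
        rw [Finset.sum_add_distrib, ← Finset.mul_sum, ← Finset.mul_sum, hp.2, hq.2]; ring

lemma cherSum_swap (p q : α → ℝ) (s : ℝ) : cherSum p q s = cherSum q p (1 - s) := by
  unfold cherSum
  refine Finset.sum_congr rfl fun x _ => ?_
  by_cases h : p x = 0 ∨ q x = 0
  · simp [h, or_comm]
  · push_neg at h
    simp only [h.1, h.2, or_self, if_false, or_comm]
    rw [sub_sub_cancel]
    ring

lemma cherSum_self {p : α → ℝ} (hp : IsPMF p) (s : ℝ) : cherSum p p s = 1 := by
  unfold cherSum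
  have : ∀ x : α, (if p x = 0 ∨ p x = 0 then (0:ℝ) else p x ^ (1 - s) * p x ^ s) = p x := by
    intro x
    by_cases h : p x = 0
    · simp [h]
    · simp only [h, or_self, if_false]
      have hx : 0 < p x := (hp.1 x).lt_of_ne (Ne.symm h)
      rw [← Real.rpow_add hx, sub_add_cancel, Real.rpow_one]
  rw [Finset.sum_congr rfl fun x _ => this x, hp.2]

end aux

section fact

variable {ι Z : Type*} [Fintype ι] [DecidableEq ι] [Fintype Z]

lemma sum_fn_prod (f : ι → Z → ℝ) :
    ∑ z : ι → Z, ∏ i, f i (z i) = ∏ i, ∑ ζ, f i ζ :=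
  (Fintype.prod_sum fun i (ζ : Z) => f i ζ).symm

lemma sum_prod_pmf (a : ι → Z → ℝ) (ha : ∀ i, IsPMF (a i)) :
    ∑ z : ι → Z, ∏ i, a i (z i) = 1 := by
  rw [sum_fn_prod]
  rw [Finset.prod_congr rfl fun i _ => (ha i).2]
  simp

lemma cher_integrand_factor (a b : ι → Z → ℝ) (ha : ∀ i ζ, 0 ≤ a i ζ)
    (hb : ∀ i ζ, 0 ≤ b i ζ) (s : ℝ) (z : ι → Z) :
    (if (∏ i, a i (z i)) = 0 ∨ (∏ i, b i (z i)) = 0 then (0:ℝ)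
      else (∏ i, a i (z i)) ^ (1 - s) * (∏ i, b i (z i)) ^ s)
    = ∏ i, (if a i (z i) = 0 ∨ b i (z i) = 0 then (0:ℝ)
      else a i (z i) ^ (1 - s) * b i (z i) ^ s) := by
  by_cases hz : ∃ i, a i (z i) = 0 ∨ b i (z i) = 0
  · obtain ⟨i₀, hi₀⟩ := hz
    rw [if_pos, Finset.prod_eq_zero (mem_univ i₀) (by simp [hi₀])]
    rcases hi₀ with h | h
    · exact Or.inl (Finset.prod_eq_zero (mem_univ i₀) h)
    · exact Or.inr (Finset.prod_eq_zero (mem_univ i₀) h)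
  · push_neg at hz
    have hane : ∀ i, a i (z i) ≠ 0 := fun i => (hz i).1
    have hbne : ∀ i, b i (z i) ≠ 0 := fun i => (hz i).2
    rw [if_neg (by
      push_neg
      exact ⟨Finset.prod_ne_zero_iff.2 fun i _ => hane i,
        Finset.prod_ne_zero_iff.2 fun i _ => hbne i⟩)]
    rw [← Real.finset_prod_rpow _ _ (fun i _ => ha i (z i)) _,
      ← Real.finset_prod_rpow _ _ (fun i _ => hb i (z i)) _,
      ← Finset.prod_mul_distrib]
    exact Finset.prod_congr rfl fun i _ => by
      rw [if_neg (by push_neg; exact ⟨hane i, hbne i⟩)]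

lemma cherSum_prod (a b : ι → Z → ℝ) (ha : ∀ i ζ, 0 ≤ a i ζ)
    (hb : ∀ i ζ, 0 ≤ b i ζ) (s : ℝ) :
    cherSum (fun z : ι → Z => ∏ i, a i (z i)) (fun z => ∏ i, b i (z i)) s
      = ∏ i, cherSum (a i) (b i) s := by
  unfold cherSum
  rw [Finset.sum_congr rfl fun z _ => cher_integrand_factor a b ha hb s z]
  exact sum_fn_prod fun i ζ =>
    if a i ζ = 0 ∨ b i ζ = 0 then (0:ℝ) else a i ζ ^ (1 - s) * b i ζ ^ s

end fact

section fact2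

variable {ι Z : Type*} [Fintype ι] [DecidableEq ι] [Fintype Z]

lemma sum_prod_insert_one (νf : ι → Z → ℝ) (i : ι) (u : Z → ℝ) :
    ∑ z : ι → Z, (∏ k, νf k (z k)) * u (z i)
      = (∑ ζ, νf i ζ * u ζ) * ∏ k ∈ Finset.univ.erase i, (∑ ζ, νf k ζ) := by
  have hpt : ∀ z : ι → Z, (∏ k, νf k (z k)) * u (z i)
      = ∏ k, (νf k (z k) * (if k = i then u (z k) else 1)) := by
    intro z
    rw [Finset.prod_mul_distrib, Finset.prod_ite_eq' Finset.univ i (fun k => u (z k))]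
    simp
  rw [Finset.sum_congr rfl fun z _ => hpt z,
    sum_fn_prod (fun k ζ => νf k ζ * (if k = i then u ζ else 1)),
    ← Finset.mul_prod_erase Finset.univ _ (mem_univ i)]
  congr 1
  · simp
  · refine Finset.prod_congr rfl fun k hk => ?_
    have : k ≠ i := (Finset.mem_erase.1 hk).1
    simp [this]

lemma sum_prod_insert_two_vanish (νf : ι → Z → ℝ) {i j : ι} (hij : i ≠ j)
    (u v : Z → ℝ) (hu : ∑ ζ, νf i ζ * u ζ = 0) :
    ∑ z : ι → Z, (∏ k, νf k (z k)) * (u (z i) * v (z j)) = 0 := by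
  have hpt : ∀ z : ι → Z, (∏ k, νf k (z k)) * (u (z i) * v (z j))
      = ∏ k, (νf k (z k) * (if k = i then u (z k) else 1) * (if k = j then v (z k) else 1)) := by
    intro z
    rw [Finset.prod_mul_distrib, Finset.prod_mul_distrib,
      Finset.prod_ite_eq' Finset.univ i (fun k => u (z k)),
      Finset.prod_ite_eq' Finset.univ j (fun k => v (z k))]
    simp only [mem_univ, if_true]
    ring
  rw [Finset.sum_congr rfl fun z _ => hpt z,
    sum_fn_prod (fun k ζ => νf k ζ * (if k = i then u ζ else 1) * (if k = j then v ζ else 1))]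
  refine Finset.prod_eq_zero (mem_univ i) ?_
  rw [← hu]
  refine Finset.sum_congr rfl fun ζ _ => ?_
  simp [hij]


lemma mean_var_bound {ι : Type*} [Fintype ι] [DecidableEq ι]
    {Z : Type*} [Fintype Z]
    (ν ℓf : ι → Z → ℝ) (Lm : ℝ)
    (hν : ∀ i ζ, 0 ≤ ν i ζ)
    (hc : ∀ i, 0 < ∑ ζ, ν i ζ)
    (hℓ : ∀ i ζ, ν i ζ ≠ 0 → (ℓf i ζ)^2 ≤ Lm^2) :
    ∃ m : ℝ,
      (∑ z : ι → Z, (∏ i, ν i (z i)) * (∑ i, ℓf i (z i)))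
        = (∏ i, ∑ ζ, ν i ζ) * m ∧
      ∑ z : ι → Z, (∏ i, ν i (z i)) * ((∑ i, ℓf i (z i)) - m)^2
        ≤ (Fintype.card ι) * Lm^2 * ∏ i, ∑ ζ, ν i ζ := by
  classical
  set c : ι → ℝ := fun i => ∑ ζ, ν i ζ with hc_def
  set C : ℝ := ∏ i, c i with hC_def
  have hC0 : 0 < C := Finset.prod_pos fun i _ => hc i
  set mi : ι → ℝ := fun i => (∑ ζ, ν i ζ * ℓf i ζ) / c i with hmi_def
  have hmi : ∀ i, ∑ ζ, ν i ζ * ℓf i ζ = c i * mi i := by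
    intro i
    simp only [hmi_def]
    rw [mul_comm, div_mul_cancel₀ _ (hc i).ne']
  have hCerase : ∀ i : ι, c i * ∏ k ∈ Finset.univ.erase i, c k = C := by
    intro i
    rw [hC_def]
    exact Finset.mul_prod_erase Finset.univ c (mem_univ i)
  refine ⟨∑ i, mi i, ?_, ?_⟩
  · calc ∑ z : ι → Z, (∏ i, ν i (z i)) * (∑ i, ℓf i (z i))
        = ∑ z : ι → Z, ∑ i, (∏ k, ν k (z k)) * ℓf i (z i) := by
          exact Finset.sum_congr rfl fun z _ => Finset.mul_sum _ _ _
      _ = ∑ i, ∑ z : ι → Z, (∏ k, ν k (z k)) * ℓf i (z i) := Finset.sum_comm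
      _ = ∑ i, (∑ ζ, ν i ζ * ℓf i ζ) * ∏ k ∈ Finset.univ.erase i, (∑ ζ, ν k ζ) :=
          Finset.sum_congr rfl fun i _ => sum_prod_insert_one ν i (ℓf i)
      _ = ∑ i, C * mi i := by
          refine Finset.sum_congr rfl fun i _ => ?_
          rw [hmi i, ← hCerase i]
          ring
      _ = C * ∑ i, mi i := by rw [Finset.mul_sum]
  · set m : ℝ := ∑ i, mi i with hm_def
    set X : ι → Z → ℝ := fun i ζ => ℓf i ζ - mi i with hX_def
    have hXc : ∀ i, ∑ ζ, ν i ζ * X i ζ = 0 := by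
      intro i
      have hpt : ∀ ζ, ν i ζ * X i ζ = ν i ζ * ℓf i ζ - ν i ζ * mi i := by
        intro ζ; simp only [hX_def]; ring
      rw [Finset.sum_congr rfl fun ζ _ => hpt ζ, Finset.sum_sub_distrib, hmi i,
        ← Finset.sum_mul, show (∑ ζ, ν i ζ) = c i from rfl]
      ring
    have hXsq : ∀ i, ∑ ζ, ν i ζ * (X i ζ * X i ζ) ≤ Lm^2 * c i := by
      intro i
      have expand : ∀ ζ, ν i ζ * (X i ζ * X i ζ)
          = ν i ζ * (ℓf i ζ)^2 - 2 * mi i * (ν i ζ * ℓf i ζ) + mi i^2 * ν i ζ := by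
        intro ζ; simp only [hX_def]; ring
      rw [Finset.sum_congr rfl fun ζ _ => expand ζ, Finset.sum_add_distrib,
        Finset.sum_sub_distrib, ← Finset.mul_sum, ← Finset.mul_sum, hmi i]
      have hterm : ∑ ζ, ν i ζ * (ℓf i ζ)^2 ≤ Lm^2 * c i := by
        rw [hc_def, Finset.mul_sum]
        refine Finset.sum_le_sum fun ζ _ => ?_
        by_cases h : ν i ζ = 0
        · simp [h]
        · have h1 := hℓ i ζ h
          have h2 := hν i ζ
          nlinarith
      rw [show (∑ ζ, ν i ζ) = c i from rfl]
      nlinarith [hterm, (hc i).le, sq_nonneg (mi i),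
        mul_nonneg (hc i).le (sq_nonneg (mi i))]
    have hLdecomp : ∀ z : ι → Z, (∑ i, ℓf i (z i)) - m = ∑ i, X i (z i) := by
      intro z
      rw [hm_def]
      simp only [hX_def]
      rw [Finset.sum_sub_distrib]
    have hoff : ∀ (i j : ι), i ≠ j →
        ∑ z : ι → Z, (∏ k, ν k (z k)) * (X i (z i) * X j (z j)) = 0 :=
      fun i j hij => sum_prod_insert_two_vanish ν hij (X i) (X j) (hXc i)
    have hdiag : ∀ i, ∑ z : ι → Z, (∏ k, ν k (z k)) * (X i (z i) * X i (z i)) ≤ Lm^2 * C := by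
      intro i
      rw [sum_prod_insert_one ν i (fun ζ => X i ζ * X i ζ)]
      have h3 : (0:ℝ) ≤ ∏ k ∈ Finset.univ.erase i, (∑ ζ, ν k ζ) :=
        Finset.prod_nonneg fun k _ => (hc k).le
      calc (∑ ζ, ν i ζ * (X i ζ * X i ζ)) * ∏ k ∈ Finset.univ.erase i, (∑ ζ, ν k ζ)
          ≤ (Lm^2 * c i) * ∏ k ∈ Finset.univ.erase i, (∑ ζ, ν k ζ) :=
            mul_le_mul_of_nonneg_right (hXsq i) h3
        _ = Lm^2 * C := by rw [mul_assoc]; rw [show (fun k => ∑ ζ, ν k ζ) = c from rfl]; rw [hCerase i]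
    calc ∑ z : ι → Z, (∏ i, ν i (z i)) * ((∑ i, ℓf i (z i)) - m)^2
        = ∑ z : ι → Z, ∑ i, ∑ j, (∏ k, ν k (z k)) * (X i (z i) * X j (z j)) := by
          refine Finset.sum_congr rfl fun z _ => ?_
          rw [hLdecomp z, sq, Finset.sum_mul_sum]
          rw [Finset.mul_sum]
          exact Finset.sum_congr rfl fun i _ => Finset.mul_sum _ _ _
      _ = ∑ i, ∑ z : ι → Z, ∑ j, (∏ k, ν k (z k)) * (X i (z i) * X j (z j)) :=
          Finset.sum_comm
      _ = ∑ i, ∑ j, ∑ z : ι → Z, (∏ k, ν k (z k)) * (X i (z i) * X j (z j)) :=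
          Finset.sum_congr rfl fun i _ => Finset.sum_comm
      _ = ∑ i, ∑ z : ι → Z, (∏ k, ν k (z k)) * (X i (z i) * X i (z i)) :=
          Finset.sum_congr rfl fun i _ => Finset.sum_eq_single i
            (fun j _ hji => hoff i j (Ne.symm hji))
            (fun h => absurd (mem_univ i) h)
      _ ≤ ∑ _i : ι, Lm^2 * C := Finset.sum_le_sum fun i _ => hdiag i
      _ = (Fintype.card ι) * Lm^2 * C := by
          rw [Finset.sum_const, Finset.card_univ, nsmul_eq_mul]; ring

end fact2

section core
set_option maxHeartbeats 1600000

variable {Z : Type*} [Fintype Z]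

lemma core_min_bound {n : ℕ} (a b : Fin n → Z → ℝ)
    (ha : ∀ i, IsPMF (a i)) (hb : ∀ i, IsPMF (b i))
    {pmin : ℝ} (hpos : 0 < pmin) (hp1 : pmin ≤ 1)
    (hla : ∀ i ζ, a i ζ ≠ 0 → pmin ≤ a i ζ) (hlb : ∀ i ζ, b i ζ ≠ 0 → pmin ≤ b i ζ)
    (hsupp : ∀ i, ∃ ζ, a i ζ ≠ 0 ∧ b i ζ ≠ 0) :
    ∃ s₀ ∈ Set.Icc (0:ℝ) 1,
      1/2 * Real.exp (-(Real.sqrt (2*n) * (- Real.log pmin))) *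
          cherSum (fun z : Fin n → Z => ∏ i, a i (z i)) (fun z => ∏ i, b i (z i)) s₀
        ≤ ∑ z : Fin n → Z, min (∏ i, a i (z i)) (∏ i, b i (z i)) := by
  classical
  set Lm : ℝ := - Real.log pmin with hLm_def
  have hLm : 0 ≤ Lm := by
    simp only [hLm_def, neg_nonneg]
    exact Real.log_nonpos hpos.le hp1
  set δ : ℝ := Real.sqrt (2*n) * Lm with hδ_def
  have hδ : 0 ≤ δ := mul_nonneg (Real.sqrt_nonneg _) hLm
  have hδsq : δ^2 = 2*n*Lm^2 := by
    rw [hδ_def, mul_pow, Real.sq_sqrt (by positivity)]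
  set p : (Fin n → Z) → ℝ := fun z => ∏ i, a i (z i) with hp_def
  set q : (Fin n → Z) → ℝ := fun z => ∏ i, b i (z i) with hq_def
  have hann : ∀ i ζ, 0 ≤ a i ζ := fun i => (ha i).1
  have hbnn : ∀ i ζ, 0 ≤ b i ζ := fun i => (hb i).1
  have hpnn : ∀ z, 0 ≤ p z := fun z => Finset.prod_nonneg fun i _ => hann i (z i)
  have hqnn : ∀ z, 0 ≤ q z := fun z => Finset.prod_nonneg fun i _ => hbnn i (z i)
  have hminnn : ∀ z, 0 ≤ min (p z) (q z) := fun z => le_min (hpnn z) (hqnn z)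
  set ν : ℝ → Fin n → Z → ℝ :=
    fun s i ζ => if a i ζ = 0 ∨ b i ζ = 0 then 0 else a i ζ ^ (1-s) * b i ζ ^ s with hν_def
  have hνnn : ∀ s i ζ, 0 ≤ ν s i ζ := by
    intro s i ζ
    by_cases h : a i ζ = 0 ∨ b i ζ = 0
    · simp [hν_def, h]
    · simp only [hν_def, h, if_false]
      exact mul_nonneg (Real.rpow_nonneg (hann i ζ) _) (Real.rpow_nonneg (hbnn i ζ) _)
  have hcν : ∀ s i, cherSum (a i) (b i) s = ∑ ζ, ν s i ζ := fun s i => rfl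
  have hc : ∀ s i, 0 < cherSum (a i) (b i) s :=
    fun s i => cherSum_pos (hann i) (hbnn i) (hsupp i) s
  set N : ℝ → (Fin n → Z) → ℝ :=
    fun s z => if p z = 0 ∨ q z = 0 then 0 else p z ^ (1-s) * q z ^ s with hN_def
  have hNfac : ∀ s z, N s z = ∏ i, ν s i (z i) :=
    fun s z => cher_integrand_factor a b hann hbnn s z
  have hNnn : ∀ s z, 0 ≤ N s z := by
    intro s z; rw [hNfac]
    exact Finset.prod_nonneg fun i _ => hνnn s i (z i)
  have hCsum : ∀ s, cherSum p q s = ∑ z, N s z := fun s => rfl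
  have hCfac : ∀ s, cherSum p q s = ∏ i, cherSum (a i) (b i) s :=
    fun s => cherSum_prod a b hann hbnn s
  have hCpos : ∀ s, 0 < cherSum p q s := by
    intro s; rw [hCfac]
    exact Finset.prod_pos fun i _ => hc s i
  set ℓ : Fin n → Z → ℝ := fun i ζ => Real.log (a i ζ) - Real.log (b i ζ) with hℓ_def
  set L : (Fin n → Z) → ℝ := fun z => ∑ i, ℓ i (z i) with hL_def
  have hℓbd : ∀ i ζ, a i ζ ≠ 0 → b i ζ ≠ 0 → (ℓ i ζ)^2 ≤ Lm^2 := by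
    intro i ζ hai hbi
    have h1 : Real.log pmin ≤ Real.log (a i ζ) := Real.log_le_log hpos (hla i ζ hai)
    have h2 : Real.log (a i ζ) ≤ 0 := Real.log_nonpos (hann i ζ) ((ha i).le_one ζ)
    have h3 : Real.log pmin ≤ Real.log (b i ζ) := Real.log_le_log hpos (hlb i ζ hbi)
    have h4 : Real.log (b i ζ) ≤ 0 := Real.log_nonpos (hbnn i ζ) ((hb i).le_one ζ)
    refine sq_le_sq' ?_ ?_ <;> simp only [hℓ_def, hLm_def] <;> linarith
  have hNcont : ∀ z, Continuous (fun s => N s z) := by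
    intro z
    by_cases h : p z = 0 ∨ q z = 0
    · have : (fun s => N s z) = fun _ => (0:ℝ) := by
        funext s; simp only [hN_def]; rw [if_pos h]
      rw [this]; exact continuous_const
    · push_neg at h
      have : (fun s => N s z) = fun s => p z ^ (1-s) * q z ^ s := by
        funext s; simp only [hN_def]; rw [if_neg (not_or.2 ⟨h.1, h.2⟩)]
      rw [this]
      exact Continuous.mul
        (Continuous.rpow continuous_const (continuous_const.sub continuous_id)
          fun _ => Or.inl h.1)
        (Continuous.rpow continuous_const continuous_id fun _ => Or.inl h.2)
  set μ : ℝ → ℝ := fun s => (∑ z, N s z * L z) / cherSum p q s with hμ_def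
  have hμcont : Continuous μ := by
    refine Continuous.div ?_ ?_ (fun s => (hCpos s).ne')
    · exact continuous_finset_sum _ fun z _ => (hNcont z).mul continuous_const
    · exact Continuous.congr (continuous_finset_sum _ fun z _ => hNcont z)
        fun s => (hCsum s).symm
  obtain ⟨s₀, hs₀I, hsgn1, hsgn2⟩ :
      ∃ s₀, s₀ ∈ Set.Icc (0:ℝ) 1 ∧ 0 ≤ s₀ * μ s₀ ∧ (1 - s₀) * μ s₀ ≤ 0 := by
    by_cases h0 : μ 0 ≤ 0
    · exact ⟨0, Set.left_mem_Icc.2 zero_le_one, by simp, by simpa using h0⟩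
    by_cases h1 : 0 ≤ μ 1
    · exact ⟨1, Set.right_mem_Icc.2 zero_le_one, by simpa using h1, by simp⟩
    · push_neg at h0 h1
      have hsub := intermediate_value_Icc' (zero_le_one (α := ℝ)) hμcont.continuousOn
      obtain ⟨s₀, hs₀, hval⟩ := hsub ⟨h1.le, h0.le⟩
      exact ⟨s₀, hs₀, by rw [hval]; simp, by rw [hval]; simp⟩
  refine ⟨s₀, hs₀I, ?_⟩
  obtain ⟨hs₀0, hs₀1⟩ := hs₀I
  set m : ℝ := μ s₀ with hm_def
  set C : ℝ := cherSum p q s₀ with hC_def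
  have hC0 : 0 < C := hCpos s₀
  have hmean : ∑ z, N s₀ z * L z = C * m := by
    rw [hm_def, hμ_def]
    field_simp
    exact (mul_div_cancel_right₀ _ hC0.ne').symm
  have hν0 : ∀ i ζ, ν s₀ i ζ ≠ 0 → (ℓ i ζ)^2 ≤ Lm^2 := by
    intro i ζ hne
    by_cases h : a i ζ = 0 ∨ b i ζ = 0
    · refine absurd ?_ hne
      simp only [hν_def]
      rw [if_pos h]
    · push_neg at h
      exact hℓbd i ζ h.1 h.2
  have hcsum' : ∀ i, 0 < ∑ ζ, ν s₀ i ζ := by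
    intro i
    rw [← hcν s₀ i]
    exact hc s₀ i
  obtain ⟨m', hm'1, hm'2⟩ := mean_var_bound (ν s₀) ℓ Lm (hνnn s₀) hcsum' hν0
  have hCprod : (∏ i, ∑ ζ, ν s₀ i ζ) = C := by
    rw [hC_def, hCfac]
    exact Finset.prod_congr rfl fun i _ => (hcν s₀ i).symm
  have hmm : m = m' := by
    have h1 : ∑ z, N s₀ z * L z = C * m' := by
      calc ∑ z, N s₀ z * L z
          = ∑ z : Fin n → Z, (∏ i, ν s₀ i (z i)) * (∑ i, ℓ i (z i)) := by
            refine Finset.sum_congr rfl fun z _ => ?_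
            rw [hNfac]
        _ = (∏ i, ∑ ζ, ν s₀ i ζ) * m' := hm'1
        _ = C * m' := by rw [hCprod]
    have h2 : C * m = C * m' := by rw [← hmean, h1]
    exact mul_left_cancel₀ hC0.ne' h2
  have hVar : ∑ z, N s₀ z * (L z - m)^2 ≤ n * Lm^2 * C := by
    calc ∑ z, N s₀ z * (L z - m)^2
        = ∑ z : Fin n → Z, (∏ i, ν s₀ i (z i)) * ((∑ i, ℓ i (z i)) - m')^2 := by
          refine Finset.sum_congr rfl fun z _ => ?_
          rw [hNfac, hmm]
      _ ≤ (Fintype.card (Fin n)) * Lm^2 * ∏ i, ∑ ζ, ν s₀ i ζ := hm'2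
      _ = n * Lm^2 * C := by rw [hCprod, Fintype.card_fin]
  set Bad : Finset (Fin n → Z) := Finset.univ.filter (fun z => ¬ ((L z - m)^2 ≤ δ^2))
    with hBad_def
  set Good : Finset (Fin n → Z) := Finset.univ.filter (fun z => (L z - m)^2 ≤ δ^2)
    with hGood_def
  have hSbad : ∑ z ∈ Bad, N s₀ z ≤ C / 2 := by
    have h1 : δ^2 * ∑ z ∈ Bad, N s₀ z ≤ ∑ z ∈ Bad, N s₀ z * (L z - m)^2 := by
      rw [Finset.mul_sum]
      refine Finset.sum_le_sum fun z hz => ?_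
      have hgt : ¬ ((L z - m)^2 ≤ δ^2) := (Finset.mem_filter.1 hz).2
      have hgt' := not_le.1 hgt
      nlinarith [hNnn s₀ z]
    have h2 : ∑ z ∈ Bad, N s₀ z * (L z - m)^2 ≤ ∑ z, N s₀ z * (L z - m)^2 :=
      Finset.sum_le_sum_of_subset_of_nonneg (Finset.filter_subset _ _)
        (fun z _ _ => mul_nonneg (hNnn s₀ z) (sq_nonneg _))
    have h3 : δ^2 * ∑ z ∈ Bad, N s₀ z ≤ n * Lm^2 * C := le_trans h1 (le_trans h2 hVar)
    by_cases hnl : n * Lm^2 = 0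
    · have hzero : ∀ z ∈ Bad, N s₀ z = 0 := by
        have hall : ∀ z ∈ Finset.univ, 0 ≤ N s₀ z * (L z - m)^2 :=
          fun z _ => mul_nonneg (hNnn s₀ z) (sq_nonneg _)
        have hsum0 : ∑ z, N s₀ z * (L z - m)^2 = 0 := by
          have : ∑ z, N s₀ z * (L z - m)^2 ≤ 0 := by
            calc ∑ z, N s₀ z * (L z - m)^2 ≤ n * Lm^2 * C := hVar
              _ = 0 := by rw [hnl]; ring
          exact le_antisymm this (Finset.sum_nonneg hall)
        intro z hz
        have hterm0 : N s₀ z * (L z - m)^2 = 0 :=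
          (Finset.sum_eq_zero_iff_of_nonneg hall).1 hsum0 z (mem_univ z)
        have hgt' := not_le.1 (Finset.mem_filter.1 hz).2
        have hδ0 : δ^2 = 0 := by rw [hδsq]; push_cast; nlinarith [hnl]
        have hpos' : 0 < (L z - m)^2 := by rw [hδ0] at hgt'; exact hgt'
        rcases mul_eq_zero.1 hterm0 with h | h
        · exact h
        · exact absurd h hpos'.ne'
      rw [Finset.sum_eq_zero hzero]
      positivity
    · have hpos' : 0 < n * Lm^2 := lt_of_le_of_ne (by positivity) (Ne.symm hnl)
      rw [hδsq] at h3
      nlinarith [h3, hpos']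
  have hptB : ∀ z ∈ Good, Real.exp (-δ) * N s₀ z ≤ min (p z) (q z) := by
    intro z hz
    have hzB : (L z - m)^2 ≤ δ^2 := (Finset.mem_filter.1 hz).2
    obtain ⟨habs1, habs2⟩ := abs_le_of_sq_le_sq' hzB hδ
    by_cases hcase : p z = 0 ∨ q z = 0
    · have h0 : N s₀ z = 0 := by simp only [hN_def]; rw [if_pos hcase]
      rw [h0, mul_zero]; exact hminnn z
    · push_neg at hcase
      have hp0 : 0 < p z := (hpnn z).lt_of_ne (Ne.symm hcase.1)
      have hq0 : 0 < q z := (hqnn z).lt_of_ne (Ne.symm hcase.2)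
      have hNz : N s₀ z = p z ^ (1-s₀) * q z ^ s₀ := by
        simp only [hN_def]; rw [if_neg (not_or.2 ⟨hcase.1, hcase.2⟩)]
      have hLz : L z = Real.log (p z) - Real.log (q z) := by
        have hlogp : Real.log (p z) = ∑ i, Real.log (a i (z i)) := by
          rw [hp_def]
          exact Real.log_prod fun i _ =>
            (Finset.prod_ne_zero_iff.1 hcase.1) i (mem_univ i)
        have hlogq : Real.log (q z) = ∑ i, Real.log (b i (z i)) := by
          rw [hq_def]
          exact Real.log_prod fun i _ =>
            (Finset.prod_ne_zero_iff.1 hcase.2) i (mem_univ i)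
        rw [hL_def, hlogp, hlogq, ← Finset.sum_sub_distrib]
      have hid1 : p z = N s₀ z * Real.exp (s₀ * L z) := by
        rw [hNz, hLz, Real.rpow_def_of_pos hp0, Real.rpow_def_of_pos hq0,
          ← Real.exp_add, ← Real.exp_add,
          show Real.log (p z) * (1 - s₀) + Real.log (q z) * s₀
            + s₀ * (Real.log (p z) - Real.log (q z)) = Real.log (p z) from by ring,
          Real.exp_log hp0]
      have hid2 : q z = N s₀ z * Real.exp (-((1-s₀) * L z)) := by
        rw [hNz, hLz, Real.rpow_def_of_pos hp0, Real.rpow_def_of_pos hq0,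
          ← Real.exp_add, ← Real.exp_add,
          show Real.log (p z) * (1 - s₀) + Real.log (q z) * s₀
            + -((1 - s₀) * (Real.log (p z) - Real.log (q z))) = Real.log (q z) from by ring,
          Real.exp_log hq0]
      have hb1 : -δ ≤ s₀ * L z := by
        have hr : s₀ * L z = s₀ * m + s₀ * (L z - m) := by ring
        have h1 : s₀ * (-δ) ≤ s₀ * (L z - m) := mul_le_mul_of_nonneg_left habs1 hs₀0
        have h2 : s₀ * δ ≤ δ := mul_le_of_le_one_left hδ hs₀1
        rw [hr]
        nlinarith [hsgn1]
      have hb2 : -δ ≤ -((1-s₀) * L z) := by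
        have hr : -((1-s₀) * L z) = -((1-s₀) * m) - (1-s₀) * (L z - m) := by ring
        have h1 : (1-s₀) * (L z - m) ≤ (1-s₀) * δ :=
          mul_le_mul_of_nonneg_left habs2 (by linarith)
        have h2 : (1-s₀) * δ ≤ δ := mul_le_of_le_one_left hδ (by linarith)
        rw [hr]
        nlinarith [hsgn2]
      refine le_min ?_ ?_
      · calc Real.exp (-δ) * N s₀ z = N s₀ z * Real.exp (-δ) := by ring
          _ ≤ N s₀ z * Real.exp (s₀ * L z) :=
            mul_le_mul_of_nonneg_left (Real.exp_le_exp.2 hb1) (hNnn s₀ z)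
          _ = p z := hid1.symm
      · calc Real.exp (-δ) * N s₀ z = N s₀ z * Real.exp (-δ) := by ring
          _ ≤ N s₀ z * Real.exp (-((1-s₀) * L z)) :=
            mul_le_mul_of_nonneg_left (Real.exp_le_exp.2 hb2) (hNnn s₀ z)
          _ = q z := hid2.symm
  have hsplit : ∑ z ∈ Good, N s₀ z + ∑ z ∈ Bad, N s₀ z = C := by
    rw [hGood_def, hBad_def, Finset.sum_filter_add_sum_filter_not, hC_def, hCsum s₀]
  calc 1/2 * Real.exp (-δ) * C = Real.exp (-δ) * (C - C/2) := by ring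
    _ ≤ Real.exp (-δ) * ∑ z ∈ Good, N s₀ z := by
        refine mul_le_mul_of_nonneg_left ?_ (Real.exp_nonneg _)
        linarith [hsplit, hSbad]
    _ = ∑ z ∈ Good, Real.exp (-δ) * N s₀ z := Finset.mul_sum _ _ _
    _ ≤ ∑ z ∈ Good, min (p z) (q z) := Finset.sum_le_sum hptB
    _ ≤ ∑ z, min (p z) (q z) :=
        Finset.sum_le_sum_of_subset_of_nonneg (Finset.filter_subset _ _)
          (fun z _ _ => hminnn z)

end core


section conc

lemma UniqueArgmax.le {g : ℝ → ℝ} {m : ℝ} (hm : UniqueArgmax g m) {u : ℝ}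
    (hu : u ∈ Set.Icc (0:ℝ) 1) : g u ≤ g m := by
  by_cases h : u = m
  · exact le_of_eq (by rw [h])
  · exact (hm.2 u hu h).le

lemma concave_min_le {f : ℝ → ℝ} (hf : ConcaveOn ℝ (Set.Icc 0 1) f) {u v w : ℝ}
    (h0 : 0 ≤ u) (huv : u ≤ v) (hvw : v ≤ w) (hw : w ≤ 1) : min (f u) (f w) ≤ f v := by
  rcases eq_or_lt_of_le (huv.trans hvw) with h | h
  · have hv : v = u := le_antisymm (h ▸ hvw) huv
    rw [hv]; exact min_le_left _ _
  · set a := (w - v)/(w - u) with ha_def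
    set b := (v - u)/(w - u) with hb_def
    have hwu : 0 < w - u := by linarith
    have ha : 0 ≤ a := div_nonneg (by linarith) hwu.le
    have hb : 0 ≤ b := div_nonneg (by linarith) hwu.le
    have hab : a + b = 1 := by
      rw [← add_div, div_eq_one_iff_eq hwu.ne']; ring
    have hv : a • u + b • w = v := by
      simp only [smul_eq_mul, ha_def, hb_def]; field_simp; ring
    have hmain := hf.2 (Set.mem_Icc.2 ⟨h0, by linarith⟩)
      (Set.mem_Icc.2 ⟨by linarith, hw⟩) ha hb hab
    rw [hv] at hmain
    simp only [smul_eq_mul] at hmain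
    calc min (f u) (f w) = a * min (f u) (f w) + b * min (f u) (f w) := by
          rw [← add_mul, hab, one_mul]
      _ ≤ a * f u + b * f w := add_le_add
          (mul_le_mul_of_nonneg_left (min_le_left _ _) ha)
          (mul_le_mul_of_nonneg_left (min_le_right _ _) hb)
      _ ≤ f v := hmain

lemma concave_incr {f : ℝ → ℝ} (hf : ConcaveOn ℝ (Set.Icc 0 1) f) {m : ℝ}
    (hm : m ∈ Set.Icc (0:ℝ) 1) (hmax : ∀ u ∈ Set.Icc (0:ℝ) 1, f u ≤ f m)
    {u v : ℝ} (h0 : 0 ≤ u) (huv : u ≤ v) (hvm : v ≤ m) : f u ≤ f v := by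
  have h1 : min (f u) (f m) ≤ f v := concave_min_le hf h0 huv hvm hm.2
  have h2 : f u ≤ f m := hmax u ⟨h0, (huv.trans hvm).trans hm.2⟩
  rwa [min_eq_left h2] at h1

lemma concave_decr {f : ℝ → ℝ} (hf : ConcaveOn ℝ (Set.Icc 0 1) f) {m : ℝ}
    (hm : m ∈ Set.Icc (0:ℝ) 1) (hmax : ∀ u ∈ Set.Icc (0:ℝ) 1, f u ≤ f m)
    {u v : ℝ} (hmu : m ≤ u) (huv : u ≤ v) (hv1 : v ≤ 1) : f v ≤ f u := by
  have h1 : min (f m) (f v) ≤ f u := concave_min_le hf hm.1 hmu huv hv1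
  have h2 : f v ≤ f m := hmax v ⟨hm.1.trans (hmu.trans huv), hv1⟩
  rwa [min_eq_right h2] at h1

lemma argmax_between {n : ℕ} (w1 : Fin n → Bool) {g h : ℝ → ℝ}
    (hgsum : ∀ s, g s = ∑ i : Fin n, (if w1 i = true then h s else h (1 - s)))
    (hh : ConcaveOn ℝ (Set.Icc 0 1) h)
    {mh mg : ℝ} (hmh : UniqueArgmax h mh) (hmg : UniqueArgmax g mg) :
    min mh (1 - mh) ≤ mg ∧ mg ≤ max mh (1 - mh) := by
  have hmh0 := hmh.1.1
  have hmh1 := hmh.1.2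
  have hmg0 := hmg.1.1
  have hmg1 := hmg.1.2
  have hmax := fun u hu => UniqueArgmax.le hmh (u := u) hu
  constructor
  · by_contra hlt
    push_neg at hlt
    set α := min mh (1 - mh) with hα_def
    have hα0 : 0 ≤ α := le_min hmh0 (by linarith)
    have hα1 : α ≤ 1 := (min_le_left _ _).trans hmh1
    have h1 : h mg ≤ h α :=
      concave_incr hh hmh.1 hmax hmg0 hlt.le (min_le_left _ _)
    have h2 : h (1 - mg) ≤ h (1 - α) := by
      refine concave_decr hh hmh.1 hmax ?_ (by linarith) (by linarith)
      have : α ≤ 1 - mh := min_le_right _ _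
      linarith
    have hle : g mg ≤ g α := by
      rw [hgsum, hgsum]
      exact Finset.sum_le_sum fun i _ => by
        by_cases hw : w1 i = true <;> simp [hw, h1, h2]
    exact absurd hle (not_le.2 (hmg.2 α ⟨hα0, hα1⟩ (ne_of_gt hlt)))
  · by_contra hlt
    push_neg at hlt
    set β := max mh (1 - mh) with hβ_def
    have hβ0 : 0 ≤ β := hmh0.trans (le_max_left _ _)
    have hβ1 : β ≤ 1 := max_le hmh1 (by linarith)
    have h1 : h mg ≤ h β :=
      concave_decr hh hmh.1 hmax (le_max_left _ _) hlt.le hmg1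
    have h2 : h (1 - mg) ≤ h (1 - β) := by
      refine concave_incr hh hmh.1 hmax (by linarith) (by linarith) ?_
      have : 1 - mh ≤ β := le_max_right _ _
      linarith
    have hle : g mg ≤ g β := by
      rw [hgsum, hgsum]
      exact Finset.sum_le_sum fun i _ => by
        by_cases hw : w1 i = true <;> simp [hw, h1, h2]
    exact absurd hle (not_le.2 (hmg.2 β ⟨hβ0, hβ1⟩ (ne_of_lt hlt)))

lemma oppType_gmax_bound {n : ℕ} (w1 : Fin n → Bool) {g h : ℝ → ℝ}
    (hgsum : ∀ s, g s = ∑ i : Fin n, (if w1 i = true then h s else h (1 - s)))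
    (hh : ConcaveOn ℝ (Set.Icc 0 1) h)
    {sStar : ℝ} (hs0 : 0 ≤ sStar) (hs2 : sStar ≤ 1/2)
    (hQord : h (1 - sStar) ≤ h sStar)
    (hopp : WeaklyOppositeType sStar g h) :
    ∀ s ∈ Set.Icc (0:ℝ) 1, g s ≤ n * h sStar := by
  have hsI : sStar ∈ Set.Icc (0:ℝ) 1 := ⟨hs0, by linarith⟩
  have hsI' : (1:ℝ) - sStar ∈ Set.Icc (0:ℝ) 1 := ⟨by linarith, by linarith⟩
  -- reduce to key fact about the argmax of g
  suffices hkey : ∃ mg, UniqueArgmax g mg ∧ h mg ≤ h sStar ∧ h (1 - mg) ≤ h sStar by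
    obtain ⟨mg, hmg, hk1, hk2⟩ := hkey
    intro s hs
    have h1 : g s ≤ g mg := UniqueArgmax.le hmg hs
    have h2 : g mg ≤ ∑ _i : Fin n, h sStar := by
      rw [hgsum]
      exact Finset.sum_le_sum fun i _ => by
        by_cases hw : w1 i = true <;> simp [hw, hk1, hk2]
    calc g s ≤ ∑ _i : Fin n, h sStar := h1.trans h2
      _ = n * h sStar := by
        rw [Finset.sum_const, Finset.card_univ, Fintype.card_fin, nsmul_eq_mul]
  -- extract argmaxes from the opposite-type hypothesis
  rcases hopp with ⟨hg1, hh1⟩ | ⟨hg1, hh1⟩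
  · -- g weakly skewed, h weakly balanced
    have hgex : ∃ mg, UniqueArgmax g mg ∧ (mg ≤ sStar ∨ 1 - sStar ≤ mg) := by
      rcases hg1 with ⟨m, hm, hloc⟩ | ⟨m, hm, hloc⟩
      · exact ⟨m, hm, hloc.imp le_of_lt le_of_lt⟩
      · exact ⟨m, hm, hloc.imp le_of_eq (fun h => le_of_eq h.symm)⟩
    have hhex : ∃ mh, UniqueArgmax h mh ∧ sStar ≤ mh ∧ mh ≤ 1 - sStar := by
      rcases hh1 with ⟨m, hm, hloc1, hloc2⟩ | ⟨m, hm, hloc⟩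
      · exact ⟨m, hm, hloc1.le, hloc2.le⟩
      · rcases hloc with h | h
        · exact ⟨m, hm, le_of_eq h.symm, by rw [h]; linarith⟩
        · exact ⟨m, hm, by rw [h]; linarith, le_of_eq h⟩
    obtain ⟨mg, hmg, hgloc⟩ := hgex
    obtain ⟨mh, hmh, hh1', hh2'⟩ := hhex
    obtain ⟨hbet1, hbet2⟩ := argmax_between w1 hgsum hh hmh hmg
    have hminI : sStar ≤ min mh (1 - mh) := le_min hh1' (by linarith)
    have hmaxI : max mh (1 - mh) ≤ 1 - sStar := max_le hh2' (by linarith)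
    have hmhcase : mh = sStar ∨ mh = 1 - sStar := by
      rcases hgloc with hc | hc
      · have h1 : min mh (1 - mh) = sStar := le_antisymm (hbet1.trans hc) hminI
        rcases le_total mh (1 - mh) with hmm | hmm
        · left; rw [min_eq_left hmm] at h1; exact h1
        · right; rw [min_eq_right hmm] at h1; linarith
      · have h1 : max mh (1 - mh) = 1 - sStar := le_antisymm hmaxI (hc.trans hbet2)
        rcases le_total mh (1 - mh) with hmm | hmm
        · left; rw [max_eq_right hmm] at h1; linarith
        · right; rw [max_eq_left hmm] at h1; exact h1
    refine ⟨mg, hmg, ?_, ?_⟩ <;>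
    · rcases hmhcase with hc | hc
      · refine (UniqueArgmax.le hmh ?_).trans (le_of_eq (by rw [hc]))
        first
          | exact hmg.1
          | exact ⟨by linarith [hmg.1.2], by linarith [hmg.1.1]⟩
      · refine ((UniqueArgmax.le hmh ?_).trans (le_of_eq (by rw [hc]))).trans hQord
        first
          | exact hmg.1
          | exact ⟨by linarith [hmg.1.2], by linarith [hmg.1.1]⟩
  · -- g weakly balanced, h weakly skewed
    have hgex : ∃ mg, UniqueArgmax g mg ∧ sStar ≤ mg ∧ mg ≤ 1 - sStar := by
      rcases hg1 with ⟨m, hm, hloc1, hloc2⟩ | ⟨m, hm, hloc⟩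
      · exact ⟨m, hm, hloc1.le, hloc2.le⟩
      · rcases hloc with h | h
        · exact ⟨m, hm, le_of_eq h.symm, by rw [h]; linarith⟩
        · exact ⟨m, hm, by rw [h]; linarith, le_of_eq h⟩
    have hhex : ∃ mh, UniqueArgmax h mh ∧ (mh ≤ sStar ∨ 1 - sStar ≤ mh) := by
      rcases hh1 with ⟨m, hm, hloc⟩ | ⟨m, hm, hloc⟩
      · exact ⟨m, hm, hloc.imp le_of_lt le_of_lt⟩
      · exact ⟨m, hm, hloc.imp le_of_eq (fun h => le_of_eq h.symm)⟩
    obtain ⟨mg, hmg, hg1', hg2'⟩ := hgex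
    obtain ⟨mh, hmh, hhloc⟩ := hhex
    have hmax := fun u hu => UniqueArgmax.le hmh (u := u) hu
    rcases hhloc with hc | hc
    · refine ⟨mg, hmg, ?_, ?_⟩
      · exact concave_decr hh hmh.1 hmax hc hg1' hmg.1.2
      · exact concave_decr hh hmh.1 hmax hc (by linarith) (by linarith [hmg.1.1])
    · refine ⟨mg, hmg, ?_, ?_⟩
      · exact (concave_incr hh hmh.1 hmax hmg.1.1 hg2' hc).trans hQord
      · exact (concave_incr hh hmh.1 hmax (by linarith [hmg.1.2]) (by linarith) hc).trans hQord

end conc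

/-- Lemma 12 of the paper. -/
theorem opp_type_Q_bound {Y Z : Type*} [Fintype Y] [Fintype Z]
    (P : Bool → Y → ℝ) (Q : Bool → Z → ℝ)
    (hP : IsChannel P) (hQ : IsChannel Q)
    (hPsupp : CommonSupport (P false) (P true))
    (hQsupp : CommonSupport (Q false) (Q true))
    (pmin : ℝ) (hpmin : MinTransPair P Q pmin)
    (sStar : ℝ) (hsStar : sStar ∈ Set.Icc (0 : ℝ) (1 / 2))
    (hmax : ∀ s ∈ Set.Icc (0 : ℝ) 1, Efun P Q s ≤ Efun P Q sStar)
    (hPord : dC (P false) (P true) (1 - sStar) ≤ dC (P false) (P true) sStar)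
    (hQord : dC (Q false) (Q true) (1 - sStar) ≤ dC (Q false) (Q true) sStar)
    {n : ℕ} (π : DetProtocol Y Z n)
    (w1 : Fin n → Bool)
    (hw1 : ∀ w : Fin n → Bool, decProb Q π.dec false w1 ≤ decProb Q π.dec false w)
    (hgnc : NonConstantOn
      (fun s => dC (prodDist Q (fun i => !(w1 i))) (prodDist Q w1) s))
    (hhnc : NonConstantOn (fun s => dC (Q false) (Q true) s))
    (hgcc : ConcaveOn ℝ (Set.Icc (0 : ℝ) 1)
      (fun s => dC (prodDist Q (fun i => !(w1 i))) (prodDist Q w1) s))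
    (hhcc : ConcaveOn ℝ (Set.Icc (0 : ℝ) 1) (fun s => dC (Q false) (Q true) s))
    (hopp : WeaklyOppositeType sStar
      (fun s => dC (prodDist Q (fun i => !(w1 i))) (prodDist Q w1) s)
      (fun s => dC (Q false) (Q true) s)) :
    - Real.log (errProb P Q π false + errProb P Q π true) ≤
      n * dC (Q false) (Q true) sStar +
        Real.sqrt (2 * n) * Real.log (1 / pmin) + Real.log 4 := by
  classical
  obtain ⟨hsS0, hsS2⟩ := hsStar
  have hYne : Nonempty Y := by
    by_contra hcon
    rw [not_nonempty_iff] at hcon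
    have h2 := (hP false).2
    rw [Finset.univ_eq_empty, Finset.sum_empty] at h2
    norm_num at h2
  have hZne : Nonempty Z := by
    by_contra hcon
    rw [not_nonempty_iff] at hcon
    have h2 := (hQ false).2
    rw [Finset.univ_eq_empty, Finset.sum_empty] at h2
    norm_num at h2
  have hpmin_pos : 0 < pmin := hpmin.1
  have hpmin1 : pmin ≤ 1 := by
    rcases hpmin.2.1 with ⟨bb, y, hy⟩ | ⟨bb, z, hz⟩
    · rw [← hy]; exact (hP bb).le_one y
    · rw [← hz]; exact (hQ bb).le_one z
  obtain ⟨x, hx0, hx1⟩ := hQsupp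
  have hQx : ∀ bb : Bool, Q bb x ≠ 0 := by
    intro bb; cases bb
    · exact hx0
    · exact hx1
  have hpdQ_nonneg : ∀ (w : Fin n → Bool) (z : Fin n → Z), 0 ≤ prodDist Q w z :=
    fun w z => Finset.prod_nonneg fun i _ => (hQ (w i)).1 (z i)
  have hpy_nonneg : ∀ (bb : Bool) (y : Fin n → Y), 0 ≤ prodDist P (π.x bb) y :=
    fun bb y => Finset.prod_nonneg fun i _ => (hP (π.x bb i)).1 (y i)
  have hpy_sum : ∀ bb : Bool, ∑ y : Fin n → Y, prodDist P (π.x bb) y = 1 :=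
    fun bb => sum_prod_pmf (fun i => P (π.x bb i)) (fun i => hP _)
  have herr_rw : ∀ bb : Bool, errProb P Q π bb
      = ∑ y : Fin n → Y, prodDist P (π.x bb) y * decProb Q π.dec (!bb) (π.W y) := by
    intro bb
    unfold errProb decProb
    refine Finset.sum_congr rfl fun y _ => ?_
    rw [Finset.mul_sum]
    exact Finset.sum_congr rfl fun z _ => by ring
  have hne' : Nonempty (Fin n → Y) := ⟨fun _ => Classical.arbitrary Y⟩
  obtain ⟨y₀, _, hy₀⟩ := Finset.exists_min_image Finset.univ
    (fun y => decProb Q π.dec true (π.W y)) ⟨Classical.arbitrary _, mem_univ _⟩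
  set w₀ : Fin n → Bool := π.W y₀ with hw₀_def
  have hmin1 : decProb Q π.dec true w₀ ≤ errProb P Q π false := by
    rw [herr_rw false]
    simp only [Bool.not_false]
    calc decProb Q π.dec true w₀
        = ∑ y : Fin n → Y, prodDist P (π.x false) y * decProb Q π.dec true w₀ := by
          rw [← Finset.sum_mul, hpy_sum false, one_mul]
      _ ≤ ∑ y : Fin n → Y, prodDist P (π.x false) y * decProb Q π.dec true (π.W y) :=
          Finset.sum_le_sum fun y _ =>
            mul_le_mul_of_nonneg_left (hy₀ y (mem_univ y)) (hpy_nonneg false y)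
  have hmin2 : decProb Q π.dec false w1 ≤ errProb P Q π true := by
    rw [herr_rw true]
    simp only [Bool.not_true]
    calc decProb Q π.dec false w1
        = ∑ y : Fin n → Y, prodDist P (π.x true) y * decProb Q π.dec false w1 := by
          rw [← Finset.sum_mul, hpy_sum true, one_mul]
      _ ≤ ∑ y : Fin n → Y, prodDist P (π.x true) y * decProb Q π.dec false (π.W y) :=
          Finset.sum_le_sum fun y _ =>
            mul_le_mul_of_nonneg_left (hw1 (π.W y)) (hpy_nonneg true y)
  have hminsum : ∑ z : Fin n → Z, min (prodDist Q w₀ z) (prodDist Q w1 z)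
      ≤ decProb Q π.dec true w₀ + decProb Q π.dec false w1 := by
    unfold decProb
    rw [← Finset.sum_add_distrib]
    refine Finset.sum_le_sum fun z _ => ?_
    cases hz : π.dec z
    · simp only [hz]
      norm_num
    · simp only [hz]
      norm_num
  -- the core bound
  have hsuppi : ∀ i, ∃ ζ, Q (w₀ i) ζ ≠ 0 ∧ Q (w1 i) ζ ≠ 0 :=
    fun i => ⟨x, hQx _, hQx _⟩
  obtain ⟨s₀, hs₀I, hcore⟩ := core_min_bound (fun i => Q (w₀ i)) (fun i => Q (w1 i))
    (fun i => hQ _) (fun i => hQ _) hpmin_pos hpmin1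
    (fun i ζ hne => hpmin.2.2.2 _ ζ hne) (fun i ζ hne => hpmin.2.2.2 _ ζ hne) hsuppi
  have hcore' : 1/2 * Real.exp (-(Real.sqrt (2*n) * (- Real.log pmin))) *
      cherSum (prodDist Q w₀) (prodDist Q w1) s₀
      ≤ ∑ z : Fin n → Z, min (prodDist Q w₀ z) (prodDist Q w1 z) := hcore
  -- comparison with the complement pair
  have hcomp : cherSum (prodDist Q (fun i => !(w1 i))) (prodDist Q w1) s₀
      ≤ cherSum (prodDist Q w₀) (prodDist Q w1) s₀ := by
    have h1 : cherSum (prodDist Q (fun i => !(w1 i))) (prodDist Q w1) s₀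
        = ∏ i, cherSum (Q (!(w1 i))) (Q (w1 i)) s₀ :=
      cherSum_prod (fun i => Q (!(w1 i))) (fun i => Q (w1 i))
        (fun i => (hQ _).1) (fun i => (hQ _).1) s₀
    have h2 : cherSum (prodDist Q w₀) (prodDist Q w1) s₀
        = ∏ i, cherSum (Q (w₀ i)) (Q (w1 i)) s₀ :=
      cherSum_prod (fun i => Q (w₀ i)) (fun i => Q (w1 i))
        (fun i => (hQ _).1) (fun i => (hQ _).1) s₀
    rw [h1, h2]
    refine Finset.prod_le_prod (fun i _ => cherSum_nonneg (hQ _).1 (hQ _).1 s₀)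
      (fun i _ => ?_)
    by_cases hei : w₀ i = w1 i
    · rw [hei]
      calc cherSum (Q (!(w1 i))) (Q (w1 i)) s₀ ≤ 1 :=
            cherSum_le_one (hQ _) (hQ _) hs₀I.1 hs₀I.2
        _ = cherSum (Q (w1 i)) (Q (w1 i)) s₀ := (cherSum_self (hQ _) s₀).symm
    · have : w₀ i = !(w1 i) := by
        cases hv : w1 i <;> cases hv2 : w₀ i <;> simp_all
      rw [this]
  -- the sum formula for g
  have hGsum : ∀ s, dC (prodDist Q (fun i => !(w1 i))) (prodDist Q w1) s
      = ∑ i : Fin n, (if w1 i = true then dC (Q false) (Q true) s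
          else dC (Q false) (Q true) (1 - s)) := by
    intro s
    have hfac : cherSum (prodDist Q (fun i => !(w1 i))) (prodDist Q w1) s
        = ∏ i, cherSum (Q (!(w1 i))) (Q (w1 i)) s :=
      cherSum_prod (fun i => Q (!(w1 i))) (fun i => Q (w1 i))
        (fun i => (hQ _).1) (fun i => (hQ _).1) s
    have hnei : ∀ i : Fin n, cherSum (Q (!(w1 i))) (Q (w1 i)) s ≠ 0 :=
      fun i => (cherSum_pos (hQ _).1 (hQ _).1 ⟨x, hQx _, hQx _⟩ s).ne'
    simp only [dC]
    rw [hfac, Real.log_prod (fun i _ => hnei i), ← Finset.sum_neg_distrib]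
    refine Finset.sum_congr rfl fun i _ => ?_
    cases hwi : w1 i
    · simp only [Bool.not_false]
      rw [cherSum_swap]
      simp
    · simp only [Bool.not_true]
      simp
  have hGbound := oppType_gmax_bound w1 hGsum hhcc hsS0 hsS2 hQord hopp
  -- positivity of the complement-pair Chernoff sum
  have hcpos : 0 < cherSum (prodDist Q (fun i => !(w1 i))) (prodDist Q w1) s₀ := by
    refine cherSum_pos (hpdQ_nonneg _) (hpdQ_nonneg _) ⟨fun _ => x, ?_, ?_⟩ s₀ <;>
      exact Finset.prod_ne_zero_iff.2 fun i _ => hQx _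
  have hcher_ge : Real.exp (-(n * dC (Q false) (Q true) sStar))
      ≤ cherSum (prodDist Q (fun i => !(w1 i))) (prodDist Q w1) s₀ := by
    have hG := hGbound s₀ hs₀I
    have h1 : -(↑n * dC (Q false) (Q true) sStar)
        ≤ Real.log (cherSum (prodDist Q (fun i => !(w1 i))) (prodDist Q w1) s₀) := by
      have : dC (prodDist Q (fun i => !(w1 i))) (prodDist Q w1) s₀
          = - Real.log (cherSum (prodDist Q (fun i => !(w1 i))) (prodDist Q w1) s₀) := rfl
      rw [this] at hG
      linarith
    exact (Real.le_log_iff_exp_le hcpos).1 h1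
  -- put everything together
  set A : ℝ := (n : ℝ) * dC (Q false) (Q true) sStar with hA_def
  set D : ℝ := Real.sqrt (2*n) * (- Real.log pmin) with hD_def
  set ε : ℝ := 1/2 * Real.exp (-D) * Real.exp (-A) with hε_def
  have hεpos : 0 < ε := by positivity
  have herr : ε ≤ errProb P Q π false + errProb P Q π true := by
    calc ε ≤ 1/2 * Real.exp (-D) *
          cherSum (prodDist Q (fun i => !(w1 i))) (prodDist Q w1) s₀ := by
          rw [hε_def]
          exact mul_le_mul_of_nonneg_left hcher_ge (by positivity)
      _ ≤ 1/2 * Real.exp (-D) * cherSum (prodDist Q w₀) (prodDist Q w1) s₀ :=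
          mul_le_mul_of_nonneg_left hcomp (by positivity)
      _ ≤ ∑ z : Fin n → Z, min (prodDist Q w₀ z) (prodDist Q w1 z) := hcore'
      _ ≤ decProb Q π.dec true w₀ + decProb Q π.dec false w1 := hminsum
      _ ≤ errProb P Q π false + errProb P Q π true := add_le_add hmin1 hmin2
  have hlog : Real.log ε ≤ Real.log (errProb P Q π false + errProb P Q π true) :=
    Real.log_le_log hεpos herr
  have hlogε : Real.log ε = - Real.log 2 - D - A := by
    rw [hε_def, Real.log_mul (by positivity) (Real.exp_ne_zero _),
      Real.log_mul (by norm_num) (Real.exp_ne_zero _), Real.log_exp, Real.log_exp]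
    rw [show (1:ℝ)/2 = 2⁻¹ from by norm_num, Real.log_inv]
    ring
  have hlog24 : Real.log 2 ≤ Real.log 4 := Real.log_le_log (by norm_num) (by norm_num)
  have hfin : Real.log (1/pmin) = - Real.log pmin := by
    rw [one_div, Real.log_inv]
  rw [hfin, ← hD_def]
  have hfinal : -(Real.log (errProb P Q π false + errProb P Q π true))
      ≤ Real.log 2 + D + A := by
    linarith [hlog, hlogε]
  linarith [hlog24, hfinal]

end
end

section
/- Let P, Q be binary-input DMCs with finite output alphabets whose conditional output distributions P_0, P_1 and Q_0, Q_1 each have a common support point, have non-constant Chernoff divergence functions, and let p_min be the smallest nonzero transition probability among P and Q. Let E* = max_{0≤s≤1} E_s and let s* ∈ (0,1/2] be a maximizer of E_s satisfying d_C(P_0,P_1,s*) ≥ d_C(P_0,P_1,1−s*), d_C(Q_0,Q_1,s*) ≥ d_C(Q_0,Q_1,1−s*), and E* = min(d_C(P_0,P_1,s*), d_C(Q_0,Q_1,s*)). Fix a deterministic n-step 2-hop protocol with codewords x⃗_0, x⃗_1 and decoding regions D_0, D_1, let w⃗_1(∅) ∈ {0,1}^n minimize Q^n(D_0 | ·), and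 let w⃗_1^c(∅) be its bit-wise complement. If −log(p_{e,0} + p_{e,1}) > nE* + √(2n)·log(1/p_min) + log 4, then there exists t ∈ {s*, 1−s*} such that d_C'(x⃗_0, x⃗_1, P^n, t) and d_C'(w⃗_1^c(∅), w⃗_1(∅), Q^n, t) have strictly opposite signs, and max(d_C(P_0,P_1,t), d_C(P_0,P_1,1−t)) = max(d_C(Q_0,Q_1,t), d_C(Q_0,Q_1,1−t)) = E*. -/
open scoped BigOperators
open Finset

noncomputable section

namespace OppAux
set_option linter.unusedSectionVars false
open Real

variable {α : Type*} [Fintype α]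

/-- summand of `cherSum`. -/
noncomputable def termf (p q : α → ℝ) (s : ℝ) (x : α) : ℝ :=
  if p x = 0 ∨ q x = 0 then 0 else p x ^ (1 - s) * q x ^ s

lemma cherSum_eq_sum_termf (p q : α → ℝ) (s : ℝ) : cherSum p q s = ∑ x, termf p q s x := rfl

lemma termf_nonneg {p q : α → ℝ} (hp : ∀ x, 0 ≤ p x) (hq : ∀ x, 0 ≤ q x) (s : ℝ) (x : α) :
    0 ≤ termf p q s x := by
  unfold termf; split
  · exact le_refl 0
  · exact mul_nonneg (Real.rpow_nonneg (hp x) _) (Real.rpow_nonneg (hq x) _)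

lemma termf_pos {p q : α → ℝ} (hp : ∀ x, 0 ≤ p x) (hq : ∀ x, 0 ≤ q x) {x : α}
    (hpx : p x ≠ 0) (hqx : q x ≠ 0) (s : ℝ) : 0 < termf p q s x := by
  have hp' : 0 < p x := lt_of_le_of_ne (hp x) (Ne.symm hpx)
  have hq' : 0 < q x := lt_of_le_of_ne (hq x) (Ne.symm hqx)
  unfold termf
  rw [if_neg (by push_neg; exact ⟨hpx, hqx⟩)]
  exact mul_pos (Real.rpow_pos_of_pos hp' _) (Real.rpow_pos_of_pos hq' _)

lemma cherSum_pos {p q : α → ℝ} (hp : ∀ x, 0 ≤ p x) (hq : ∀ x, 0 ≤ q x)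
    (hsupp : CommonSupport p q) (s : ℝ) : 0 < cherSum p q s := by
  obtain ⟨x₀, hx₀, hx₀'⟩ := hsupp
  rw [cherSum_eq_sum_termf]
  exact Finset.sum_pos' (fun x _ => termf_nonneg hp hq s x)
    ⟨x₀, Finset.mem_univ x₀, termf_pos hp hq hx₀ hx₀' s⟩

lemma cherSum_le_one {p q : α → ℝ} (hp : IsPMF p) (hq : IsPMF q) {s : ℝ}
    (hs0 : 0 ≤ s) (hs1 : s ≤ 1) : cherSum p q s ≤ 1 := by
  rw [cherSum_eq_sum_termf]
  have hle : ∀ x ∈ Finset.univ, termf p q s x ≤ (1 - s) * p x + s * q x := by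
    intro x _
    unfold termf; split
    · exact add_nonneg (mul_nonneg (by linarith) (hp.1 x)) (mul_nonneg hs0 (hq.1 x))
    · exact Real.geom_mean_le_arith_mean2_weighted (by linarith) hs0 (hp.1 x) (hq.1 x)
        (by ring)
  calc ∑ x, termf p q s x ≤ ∑ x, ((1 - s) * p x + s * q x) := Finset.sum_le_sum hle
    _ = 1 := by rw [Finset.sum_add_distrib, ← Finset.mul_sum, ← Finset.mul_sum, hp.2, hq.2]; ring

lemma dC_nonneg {p q : α → ℝ} (hp : IsPMF p) (hq : IsPMF q) {s : ℝ}
    (hs0 : 0 ≤ s) (hs1 : s ≤ 1) (hsupp : CommonSupport p q) : 0 ≤ dC p q s := by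
  have h1 := cherSum_le_one hp hq hs0 hs1
  have h0 := cherSum_pos hp.1 hq.1 hsupp s
  simp only [dC, neg_nonneg]
  exact Real.log_nonpos h0.le h1

lemma cherSum_swap (p q : α → ℝ) (s : ℝ) : cherSum q p s = cherSum p q (1 - s) := by
  unfold cherSum
  refine Finset.sum_congr rfl fun x _ => ?_
  by_cases h : p x = 0 ∨ q x = 0
  · rw [if_pos h, if_pos (Or.symm h)]
  · rw [if_neg (fun hc => h (Or.symm hc)), if_neg h, sub_sub_cancel, mul_comm]

lemma dC_swap (p q : α → ℝ) (s : ℝ) : dC q p s = dC p q (1 - s) := by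
  unfold dC; rw [cherSum_swap]

lemma cherSum_self {p : α → ℝ} (hp : IsPMF p) (s : ℝ) : cherSum p p s = 1 := by
  unfold cherSum
  have : ∀ x ∈ Finset.univ, (if p x = 0 ∨ p x = 0 then (0:ℝ) else p x ^ (1 - s) * p x ^ s)
      = p x := by
    intro x _
    by_cases h : p x = 0
    · simp [h]
    · have hp' : 0 < p x := lt_of_le_of_ne (hp.1 x) (Ne.symm h)
      rw [if_neg (by simp [h]), ← Real.rpow_add hp']
      simp
  rw [Finset.sum_congr rfl this, hp.2]

lemma dC_self {p : α → ℝ} (hp : IsPMF p) (s : ℝ) : dC p p s = 0 := by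
  unfold dC; rw [cherSum_self hp]; simp

end OppAux
namespace OppAux
set_option linter.unusedSectionVars false
open Real

variable {α : Type*} [Fintype α]

lemma hasDerivAt_termf {p q : α → ℝ} (hp : ∀ x, 0 ≤ p x) (hq : ∀ x, 0 ≤ q x) (x : α) (s : ℝ) :
    HasDerivAt (fun s => termf p q s x)
      (termf p q s x * (Real.log (q x) - Real.log (p x))) s := by
  by_cases h : p x = 0 ∨ q x = 0
  · have h0 : (fun s => termf p q s x) = fun _ => (0:ℝ) := by
      funext t; unfold termf; rw [if_pos h]
    have h1 : termf p q s x = 0 := by unfold termf; rw [if_pos h]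
    rw [h0, h1, zero_mul]
    exact hasDerivAt_const s 0
  · push_neg at h
    have hp' : 0 < p x := lt_of_le_of_ne (hp x) (Ne.symm h.1)
    have hq' : 0 < q x := lt_of_le_of_ne (hq x) (Ne.symm h.2)
    have h0 : (fun s => termf p q s x)
        = fun s => Real.exp (Real.log (p x) + s * (Real.log (q x) - Real.log (p x))) := by
      funext t
      unfold termf
      rw [if_neg (by push_neg; exact ⟨h.1, h.2⟩), Real.rpow_def_of_pos hp',
        Real.rpow_def_of_pos hq', ← Real.exp_add]
      ring_nf
    rw [h0]
    have hlin : HasDerivAt (fun s : ℝ => Real.log (p x) + s * (Real.log (q x) - Real.log (p x)))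
        (Real.log (q x) - Real.log (p x)) s := by
      simpa using ((hasDerivAt_id s).mul_const (Real.log (q x) - Real.log (p x))).const_add
        (Real.log (p x))
    have := hlin.exp
    convert this using 1
    unfold termf
    rw [if_neg (by push_neg; exact ⟨h.1, h.2⟩), Real.rpow_def_of_pos hp',
      Real.rpow_def_of_pos hq', ← Real.exp_add]
    ring_nf

/-- derivative of `cherSum` in `s`. -/
noncomputable def cherSumD (p q : α → ℝ) (s : ℝ) : ℝ :=
  ∑ x, termf p q s x * (Real.log (q x) - Real.log (p x))

lemma hasDerivAt_cherSum {p q : α → ℝ} (hp : ∀ x, 0 ≤ p x) (hq : ∀ x, 0 ≤ q x) (s : ℝ) :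
    HasDerivAt (cherSum p q) (cherSumD p q s) s := by
  have : HasDerivAt (fun s => ∑ x, termf p q s x) (cherSumD p q s) s :=
    HasDerivAt.fun_sum (fun x _ => hasDerivAt_termf hp hq x s)
  exact this

/-- the derivative of `dC p q`. -/
noncomputable def dCd (p q : α → ℝ) (s : ℝ) : ℝ :=
  (∑ x, termf p q s x * (Real.log (p x) - Real.log (q x))) / cherSum p q s

lemma hasDerivAt_dC {p q : α → ℝ} (hp : ∀ x, 0 ≤ p x) (hq : ∀ x, 0 ≤ q x)
    (hsupp : CommonSupport p q) (s : ℝ) : HasDerivAt (dC p q) (dCd p q s) s := by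
  have hc := cherSum_pos hp hq hsupp s
  have h1 : HasDerivAt (fun s => Real.log (cherSum p q s)) (cherSumD p q s / cherSum p q s) s :=
    (hasDerivAt_cherSum hp hq s).log (ne_of_gt hc)
  have h2 := h1.neg
  have h3 : dC p q = fun s => - Real.log (cherSum p q s) := rfl
  rw [h3]
  refine h2.congr_deriv ?_
  unfold dCd cherSumD
  rw [← neg_div, ← Finset.sum_neg_distrib]
  congr 1
  refine Finset.sum_congr rfl fun x _ => by ring

lemma deriv_dC {p q : α → ℝ} (hp : ∀ x, 0 ≤ p x) (hq : ∀ x, 0 ≤ q x)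
    (hsupp : CommonSupport p q) (s : ℝ) : deriv (dC p q) s = dCd p q s :=
  (hasDerivAt_dC hp hq hsupp s).deriv

lemma continuous_dC {p q : α → ℝ} (hp : ∀ x, 0 ≤ p x) (hq : ∀ x, 0 ≤ q x)
    (hsupp : CommonSupport p q) : Continuous (dC p q) := by
  rw [continuous_iff_continuousAt]
  exact fun s => (hasDerivAt_dC hp hq hsupp s).continuousAt

lemma differentiableAt_dC {p q : α → ℝ} (hp : ∀ x, 0 ≤ p x) (hq : ∀ x, 0 ≤ q x)
    (hsupp : CommonSupport p q) (s : ℝ) : DifferentiableAt ℝ (dC p q) s :=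
  (hasDerivAt_dC hp hq hsupp s).differentiableAt

lemma concaveOn_dC {p q : α → ℝ} (hp : ∀ x, 0 ≤ p x) (hq : ∀ x, 0 ≤ q x)
    (hsupp : CommonSupport p q) : ConcaveOn ℝ Set.univ (dC p q) := by
  refine ⟨convex_univ, ?_⟩
  intro u _ v _ a b ha hb hab
  rcases eq_or_lt_of_le ha with ha0 | ha0
  · have hb1 : b = 1 := by linarith
    simp [← ha0, hb1]
  rcases eq_or_lt_of_le hb with hb0 | hb0
  · have ha1 : a = 1 := by linarith
    simp [← hb0, ha1]
  have hSA := cherSum_pos hp hq hsupp u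
  have hSB := cherSum_pos hp hq hsupp v
  set SA := cherSum p q u with hSAdef
  set SB := cherSum p q v with hSBdef
  have key : cherSum p q (a * u + b * v) ≤ SA ^ a * SB ^ b := by
    have hterm : ∀ x ∈ Finset.univ, termf p q (a * u + b * v) x
        ≤ SA ^ a * SB ^ b * (a * (termf p q u x / SA) + b * (termf p q v x / SB)) := by
      intro x _
      have hid : termf p q (a * u + b * v) x = termf p q u x ^ a * termf p q v x ^ b := by
        unfold termf
        by_cases h : p x = 0 ∨ q x = 0
        · rw [if_pos h, if_pos h, if_pos h,
            Real.zero_rpow (ne_of_gt ha0), Real.zero_rpow (ne_of_gt hb0), mul_zero]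
        · push_neg at h
          have hp' : 0 < p x := lt_of_le_of_ne (hp x) (Ne.symm h.1)
          have hq' : 0 < q x := lt_of_le_of_ne (hq x) (Ne.symm h.2)
          rw [if_neg (by push_neg; exact h), if_neg (by push_neg; exact h),
            if_neg (by push_neg; exact h),
            Real.mul_rpow (Real.rpow_nonneg hp'.le _) (Real.rpow_nonneg hq'.le _),
            Real.mul_rpow (Real.rpow_nonneg hp'.le _) (Real.rpow_nonneg hq'.le _),
            ← Real.rpow_mul hp'.le, ← Real.rpow_mul hq'.le,
            ← Real.rpow_mul hp'.le, ← Real.rpow_mul hq'.le]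
          rw [mul_mul_mul_comm, ← Real.rpow_add hp', ← Real.rpow_add hq']
          congr 1
          · congr 1; ring_nf; linarith [hab]
          · congr 1; ring
      rw [hid]
      have h1 : termf p q u x = SA * (termf p q u x / SA) := by field_simp
      have h2 : termf p q v x = SB * (termf p q v x / SB) := by field_simp
      calc termf p q u x ^ a * termf p q v x ^ b
          = (SA * (termf p q u x / SA)) ^ a * (SB * (termf p q v x / SB)) ^ b := by
            rw [← h1, ← h2]
        _ = SA ^ a * SB ^ b * ((termf p q u x / SA) ^ a * (termf p q v x / SB) ^ b) := by
            rw [Real.mul_rpow hSA.le (div_nonneg (termf_nonneg hp hq u x) hSA.le),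
              Real.mul_rpow hSB.le (div_nonneg (termf_nonneg hp hq v x) hSB.le)]
            ring
        _ ≤ SA ^ a * SB ^ b * (a * (termf p q u x / SA) + b * (termf p q v x / SB)) := by
            refine mul_le_mul_of_nonneg_left ?_
              (mul_nonneg (Real.rpow_nonneg hSA.le _) (Real.rpow_nonneg hSB.le _))
            exact Real.geom_mean_le_arith_mean2_weighted ha hb
              (div_nonneg (termf_nonneg hp hq u x) hSA.le)
              (div_nonneg (termf_nonneg hp hq v x) hSB.le) hab
    calc cherSum p q (a * u + b * v) = ∑ x, termf p q (a * u + b * v) x := rfl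
      _ ≤ ∑ x, SA ^ a * SB ^ b * (a * (termf p q u x / SA) + b * (termf p q v x / SB)) :=
          Finset.sum_le_sum hterm
      _ = SA ^ a * SB ^ b * (a * (SA / SA) + b * (SB / SB)) := by
          rw [← Finset.mul_sum]
          congr 1
          rw [Finset.sum_add_distrib]
          congr 1
          · rw [← Finset.mul_sum, ← Finset.sum_div]; rfl
          · rw [← Finset.mul_sum, ← Finset.sum_div]; rfl
      _ = SA ^ a * SB ^ b := by
          rw [div_self (ne_of_gt hSA), div_self (ne_of_gt hSB)]
          rw [mul_one, mul_one, hab, mul_one]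
  have hpos := cherSum_pos hp hq hsupp (a * u + b * v)
  have hlog := Real.log_le_log hpos key
  have hRHS : Real.log (SA ^ a * SB ^ b) = a * Real.log SA + b * Real.log SB := by
    rw [Real.log_mul (ne_of_gt (Real.rpow_pos_of_pos hSA a)) (ne_of_gt (Real.rpow_pos_of_pos hSB b)),
      Real.log_rpow hSA, Real.log_rpow hSB]
  have : a • u + b • v = a * u + b * v := rfl
  simp only [dC, this, smul_eq_mul]
  rw [hRHS] at hlog
  linarith

end OppAux
namespace OppAux
set_option linter.unusedSectionVars false
open Real

variable {Y : Type*} [Fintype Y] {n : ℕ}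

/-- product distribution of a family of per-letter distributions. -/
noncomputable def pd (p : Fin n → Y → ℝ) : (Fin n → Y) → ℝ := fun y => ∏ i, p i (y i)

lemma sum_pd_mul (q f : Fin n → Y → ℝ) :
    ∑ y : Fin n → Y, pd q y * ∏ i, f i (y i) = ∏ i, ∑ v, q i v * f i v := by
  rw [Fintype.prod_sum (fun i v => q i v * f i v)]
  refine Finset.sum_congr rfl fun y _ => ?_
  rw [pd, ← Finset.prod_mul_distrib]

lemma sum_pd {q : Fin n → Y → ℝ} (hq : ∀ i, IsPMF (q i)) : ∑ y : Fin n → Y, pd q y = 1 := by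
  have := sum_pd_mul q (fun _ _ => 1)
  simp only [mul_one, Finset.prod_const_one] at this
  rw [this]
  exact Finset.prod_eq_one fun i _ => (hq i).2

lemma prod_two {F : Fin n → ℝ} {i j : Fin n} (hij : i ≠ j)
    (h1 : ∀ k, k ≠ i → k ≠ j → F k = 1) : ∏ k, F k = F i * F j := by
  rw [← Finset.mul_prod_erase Finset.univ F (Finset.mem_univ i)]
  have hj : j ∈ Finset.univ.erase i := Finset.mem_erase.mpr ⟨hij.symm, Finset.mem_univ j⟩
  rw [← Finset.mul_prod_erase _ F hj]
  have : ∏ k ∈ (Finset.univ.erase i).erase j, F k = 1 := by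
    refine Finset.prod_eq_one fun k hk => ?_
    have hk1 := Finset.mem_erase.mp hk
    have hk2 := Finset.mem_erase.mp hk1.2
    exact h1 k hk2.1 hk1.1
  rw [this, mul_one]

lemma prod_one_of {F : Fin n → ℝ} {i : Fin n} (h1 : ∀ k, k ≠ i → F k = 1) : ∏ k, F k = F i := by
  rw [← Finset.mul_prod_erase Finset.univ F (Finset.mem_univ i)]
  have : ∏ k ∈ Finset.univ.erase i, F k = 1 :=
    Finset.prod_eq_one fun k hk => h1 k (Finset.mem_erase.mp hk).1
  rw [this, mul_one]

lemma E_single {q : Fin n → Y → ℝ} (hq : ∀ i, IsPMF (q i)) (i : Fin n) (f : Y → ℝ) :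
    ∑ y : Fin n → Y, pd q y * f (y i) = ∑ v, q i v * f v := by
  classical
  have := sum_pd_mul q (fun j v => if j = i then f v else 1)
  have hL : ∀ y : Fin n → Y, (∏ j, if j = i then f (y j) else (1:ℝ)) = f (y i) := by
    intro y
    refine prod_one_of (fun k hk => if_neg hk) |>.trans (by simp)
  have hR : ∀ j, (∑ v, q j v * if j = i then f v else (1:ℝ))
      = if j = i then (∑ v, q i v * f v) else 1 := by
    intro j
    by_cases hj : j = i
    · subst hj; simp
    · simp only [if_neg hj, mul_one]
      exact (hq j).2
  calc ∑ y : Fin n → Y, pd q y * f (y i)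
      = ∑ y : Fin n → Y, pd q y * ∏ j, (if j = i then f (y j) else 1) := by
        refine Finset.sum_congr rfl fun y _ => by rw [hL y]
    _ = ∏ j, ∑ v, q j v * (if j = i then f v else 1) :=
        sum_pd_mul q (fun j v => if j = i then f v else 1)
    _ = ∏ j, (if j = i then (∑ v, q i v * f v) else 1) := Finset.prod_congr rfl fun j _ => hR j
    _ = ∑ v, q i v * f v := by
        refine (prod_one_of (fun k hk => if_neg hk)).trans (by simp)

lemma E_pair {q : Fin n → Y → ℝ} (hq : ∀ i, IsPMF (q i)) {i j : Fin n} (hij : i ≠ j)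
    (A B : Y → ℝ) :
    ∑ y : Fin n → Y, pd q y * (A (y i) * B (y j))
      = (∑ v, q i v * A v) * (∑ v, q j v * B v) := by
  classical
  have hL : ∀ y : Fin n → Y,
      (∏ k, if k = i then A (y k) else if k = j then B (y k) else (1:ℝ))
        = A (y i) * B (y j) := by
    intro y
    refine (prod_two hij (fun k hk1 hk2 => by rw [if_neg hk1, if_neg hk2])).trans ?_
    rw [if_pos rfl, if_neg hij.symm, if_pos rfl]
  have hR : ∀ k, (∑ v, q k v * if k = i then A v else if k = j then B v else (1:ℝ))
      = if k = i then (∑ v, q i v * A v) else if k = j then (∑ v, q j v * B v) else 1 := by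
    intro k
    by_cases h1 : k = i
    · subst h1; simp
    · by_cases h2 : k = j
      · subst h2; simp [h1]
      · simp only [if_neg h1, if_neg h2, mul_one]
        exact (hq k).2
  calc ∑ y : Fin n → Y, pd q y * (A (y i) * B (y j))
      = ∑ y : Fin n → Y, pd q y * ∏ k, (if k = i then A (y k) else if k = j then B (y k) else 1) := by
        refine Finset.sum_congr rfl fun y _ => by rw [hL y]
    _ = ∏ k, ∑ v, q k v * (if k = i then A v else if k = j then B v else 1) :=
        sum_pd_mul q (fun k v => if k = i then A v else if k = j then B v else 1)
    _ = ∏ k, (if k = i then (∑ v, q i v * A v) else if k = j then (∑ v, q j v * B v) else 1) :=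
        Finset.prod_congr rfl fun k _ => hR k
    _ = (∑ v, q i v * A v) * (∑ v, q j v * B v) := by
        refine (prod_two hij (fun k hk1 hk2 => by rw [if_neg hk1, if_neg hk2])).trans ?_
        rw [if_pos rfl, if_neg hij.symm, if_pos rfl]

lemma mean_eq {q : Fin n → Y → ℝ} (hq : ∀ i, IsPMF (q i)) (ℓi : Fin n → Y → ℝ) :
    ∑ y : Fin n → Y, pd q y * (∑ i, ℓi i (y i)) = ∑ i, ∑ v, q i v * ℓi i v := by
  calc ∑ y : Fin n → Y, pd q y * (∑ i, ℓi i (y i))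
      = ∑ y : Fin n → Y, ∑ i, pd q y * ℓi i (y i) := by
        refine Finset.sum_congr rfl fun y _ => Finset.mul_sum _ _ _
    _ = ∑ i, ∑ y : Fin n → Y, pd q y * ℓi i (y i) := Finset.sum_comm
    _ = ∑ i, ∑ v, q i v * ℓi i v := Finset.sum_congr rfl fun i _ => E_single hq i _

lemma var_le {q : Fin n → Y → ℝ} (hq : ∀ i, IsPMF (q i)) (ℓi : Fin n → Y → ℝ) {L : ℝ}
    (hL : 0 ≤ L) (hb : ∀ i v, q i v ≠ 0 → |ℓi i v| ≤ L) :
    ∑ y : Fin n → Y, pd q y * ((∑ i, ℓi i (y i)) - ∑ i, (∑ v, q i v * ℓi i v)) ^ 2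
      ≤ n * L ^ 2 := by
  classical
  set m : Fin n → ℝ := fun i => ∑ v, q i v * ℓi i v with hm
  set a : Fin n → Y → ℝ := fun i v => ℓi i v - m i with ha
  have key0 : ∀ i, ∑ v, q i v * a i v = 0 := by
    intro i
    simp only [ha, mul_sub]
    rw [Finset.sum_sub_distrib, ← Finset.sum_mul, (hq i).2, one_mul]
    simp [hm]
  have hrw : ∀ y : Fin n → Y, ((∑ i, ℓi i (y i)) - ∑ i, m i) = ∑ i, a i (y i) := by
    intro y; rw [← Finset.sum_sub_distrib]
  have hdiag : ∀ i : Fin n, ∑ v, q i v * (a i v * a i v) ≤ L ^ 2 := by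
    intro i
    have h1 : ∀ v, q i v * (a i v * a i v) = q i v * (ℓi i v)^2 - 2 * m i * (q i v * ℓi i v)
        + m i ^ 2 * q i v := by
      intro v; simp only [ha]; ring
    rw [Finset.sum_congr rfl fun v _ => h1 v]
    rw [Finset.sum_add_distrib, Finset.sum_sub_distrib, ← Finset.mul_sum, ← Finset.mul_sum,
      (hq i).2, mul_one]
    have hmid : (∑ v, q i v * ℓi i v) = m i := rfl
    rw [hmid]
    have h2 : ∑ v, q i v * (ℓi i v)^2 ≤ L ^ 2 := by
      have : ∀ v ∈ Finset.univ, q i v * (ℓi i v)^2 ≤ q i v * L^2 := by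
        intro v _
        by_cases hv : q i v = 0
        · rw [hv]; simp
        · refine mul_le_mul_of_nonneg_left ?_ ((hq i).1 v)
          have := hb i v hv
          calc (ℓi i v)^2 = |ℓi i v|^2 := (sq_abs _).symm
            _ ≤ L^2 := by
              apply pow_le_pow_left₀ (abs_nonneg _) this
      calc ∑ v, q i v * (ℓi i v)^2 ≤ ∑ v, q i v * L^2 := Finset.sum_le_sum this
        _ = L ^ 2 := by rw [← Finset.sum_mul, (hq i).2, one_mul]
    nlinarith [sq_nonneg (m i)]
  calc ∑ y : Fin n → Y, pd q y * ((∑ i, ℓi i (y i)) - ∑ i, m i) ^ 2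
      = ∑ y : Fin n → Y, ∑ i, ∑ j, pd q y * (a i (y i) * a j (y j)) := by
        refine Finset.sum_congr rfl fun y _ => ?_
        rw [hrw y, sq, Finset.sum_mul_sum]
        rw [Finset.mul_sum]
        refine Finset.sum_congr rfl fun i _ => ?_
        rw [Finset.mul_sum]
    _ = ∑ i, ∑ j, ∑ y : Fin n → Y, pd q y * (a i (y i) * a j (y j)) := by
        rw [Finset.sum_comm]
        refine Finset.sum_congr rfl fun i _ => Finset.sum_comm
    _ ≤ ∑ i : Fin n, L ^ 2 := by
        refine Finset.sum_le_sum fun i _ => ?_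
        have hsplit : ∑ j, ∑ y : Fin n → Y, pd q y * (a i (y i) * a j (y j))
            = ∑ y : Fin n → Y, pd q y * (a i (y i) * a i (y i)) := by
          rw [Finset.sum_eq_single i]
          · intro j _ hji
            rw [E_pair hq (Ne.symm hji) (a i) (a j), key0 j, mul_zero]
          · intro hi; exact absurd (Finset.mem_univ i) hi
        rw [hsplit, E_single hq i (fun v => a i v * a i v)]
        exact hdiag i
    _ = n * L ^ 2 := by
        rw [Finset.sum_const, Finset.card_univ, Fintype.card_fin, nsmul_eq_mul]

end OppAux
namespace OppAux
set_option linter.unusedSectionVars false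
open Real

section Single
variable {α : Type*} [Fintype α]

lemma tilted_nonneg {p q : α → ℝ} (hp : ∀ x, 0 ≤ p x) (hq : ∀ x, 0 ≤ q x)
    (hsupp : CommonSupport p q) (s : ℝ) (x : α) : 0 ≤ tilted p q s x :=
  div_nonneg (termf_nonneg hp hq s x) (cherSum_pos hp hq hsupp s).le

lemma tilted_eq (p q : α → ℝ) (s : ℝ) (x : α) :
    tilted p q s x = termf p q s x / cherSum p q s := rfl

lemma sum_tilted {p q : α → ℝ} (hp : ∀ x, 0 ≤ p x) (hq : ∀ x, 0 ≤ q x)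
    (hsupp : CommonSupport p q) (s : ℝ) : ∑ x, tilted p q s x = 1 := by
  rw [Finset.sum_congr rfl fun x _ => tilted_eq p q s x, ← Finset.sum_div,
    ← cherSum_eq_sum_termf, div_self (ne_of_gt (cherSum_pos hp hq hsupp s))]

lemma tilted_ne_zero {p q : α → ℝ} {s : ℝ} {x : α} (h : tilted p q s x ≠ 0) :
    p x ≠ 0 ∧ q x ≠ 0 := by
  by_contra hc
  rw [not_and_or, not_ne_iff, not_ne_iff] at hc
  apply h
  rw [tilted_eq, termf, if_pos hc, zero_div]

lemma sum_tilted_mul_log {p q : α → ℝ} (s : ℝ) :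
    ∑ x, tilted p q s x * (Real.log (p x) - Real.log (q x)) = dCd p q s := by
  rw [dCd, Finset.sum_div]
  refine Finset.sum_congr rfl fun x _ => ?_
  rw [tilted_eq, div_mul_eq_mul_div]

end Single

section Prod
variable {Y : Type*} [Fintype Y] {n : ℕ}

lemma pd_eq_zero_iff {p : Fin n → Y → ℝ} (y : Fin n → Y) :
    pd p y = 0 ↔ ∃ i, p i (y i) = 0 := by
  rw [pd, Finset.prod_eq_zero_iff]
  simp

lemma termf_pd {p q : Fin n → Y → ℝ} (hp : ∀ i v, 0 ≤ p i v) (hq : ∀ i v, 0 ≤ q i v)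
    (s : ℝ) (y : Fin n → Y) :
    termf (pd p) (pd q) s y = ∏ i, termf (p i) (q i) s (y i) := by
  by_cases hz : pd p y = 0 ∨ pd q y = 0
  · rw [termf, if_pos hz]
    rcases hz with hz | hz
    · obtain ⟨i, hi⟩ := (pd_eq_zero_iff y).mp hz
      refine (Finset.prod_eq_zero (Finset.mem_univ i) ?_).symm
      rw [termf, if_pos (Or.inl hi)]
    · obtain ⟨i, hi⟩ := (pd_eq_zero_iff y).mp hz
      refine (Finset.prod_eq_zero (Finset.mem_univ i) ?_).symm
      rw [termf, if_pos (Or.inr hi)]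
  · push_neg at hz
    have hpz : ∀ i, p i (y i) ≠ 0 := by
      intro i hi
      exact hz.1 ((pd_eq_zero_iff y).mpr ⟨i, hi⟩)
    have hqz : ∀ i, q i (y i) ≠ 0 := by
      intro i hi
      exact hz.2 ((pd_eq_zero_iff y).mpr ⟨i, hi⟩)
    rw [termf, if_neg (by push_neg; exact hz)]
    have h1 : pd p y ^ (1 - s) = ∏ i, p i (y i) ^ (1 - s) := by
      rw [pd, ← Real.finset_prod_rpow _ _ (fun i _ => hp i (y i))]
    have h2 : pd q y ^ s = ∏ i, q i (y i) ^ s := by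
      rw [pd, ← Real.finset_prod_rpow _ _ (fun i _ => hq i (y i))]
    rw [h1, h2, ← Finset.prod_mul_distrib]
    refine Finset.prod_congr rfl fun i _ => ?_
    rw [termf, if_neg (by push_neg; exact ⟨hpz i, hqz i⟩)]

lemma cherSum_pd {p q : Fin n → Y → ℝ} (hp : ∀ i v, 0 ≤ p i v) (hq : ∀ i v, 0 ≤ q i v)
    (s : ℝ) : cherSum (pd p) (pd q) s = ∏ i, cherSum (p i) (q i) s := by
  rw [cherSum_eq_sum_termf,
    Finset.sum_congr rfl fun y _ => termf_pd hp hq s y]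
  rw [Finset.prod_congr rfl fun i (_ : i ∈ Finset.univ) => cherSum_eq_sum_termf (p i) (q i) s]
  exact (Fintype.prod_sum (fun i v => termf (p i) (q i) s v)).symm

lemma commonSupport_pd {p q : Fin n → Y → ℝ} (hsupp : ∀ i, CommonSupport (p i) (q i)) :
    CommonSupport (pd p) (pd q) := by
  classical
  refine ⟨fun i => Classical.choose (hsupp i), ?_, ?_⟩
  · rw [Ne, pd_eq_zero_iff]
    push_neg
    exact fun i => (Classical.choose_spec (hsupp i)).1
  · rw [Ne, pd_eq_zero_iff]
    push_neg
    exact fun i => (Classical.choose_spec (hsupp i)).2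

lemma dC_pd {p q : Fin n → Y → ℝ} (hp : ∀ i v, 0 ≤ p i v) (hq : ∀ i v, 0 ≤ q i v)
    (hsupp : ∀ i, CommonSupport (p i) (q i)) (s : ℝ) :
    dC (pd p) (pd q) s = ∑ i, dC (p i) (q i) s := by
  rw [dC, cherSum_pd hp hq s,
    Real.log_prod (fun i _ => ne_of_gt (cherSum_pos (hp i) (hq i) (hsupp i) s))]
  rw [← Finset.sum_neg_distrib]
  rfl

lemma tilted_pd {p q : Fin n → Y → ℝ} (hp : ∀ i v, 0 ≤ p i v) (hq : ∀ i v, 0 ≤ q i v)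
    (s : ℝ) (y : Fin n → Y) :
    tilted (pd p) (pd q) s y = ∏ i, tilted (p i) (q i) s (y i) := by
  rw [tilted_eq, termf_pd hp hq s y, cherSum_pd hp hq s]
  rw [Finset.prod_congr rfl fun i (_ : i ∈ Finset.univ) => tilted_eq (p i) (q i) s (y i)]
  rw [Finset.prod_div_distrib]

end Prod
end OppAux
namespace OppAux
open Real Filter Set Topology

lemma conc_combo (f : ℝ → ℝ) (hf : ConcaveOn ℝ Set.univ f) {a m u : ℝ} (ham : a < m)
    (hau : a ≤ u) (hum : u ≤ m) :
    (m - u) / (m - a) * f a + (u - a) / (m - a) * f m ≤ f u := by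
  have hma : (0:ℝ) < m - a := by linarith
  have hcoeff : (m - u) / (m - a) + (u - a) / (m - a) = 1 := by
    field_simp
    ring
  have h := hf.2 (Set.mem_univ a) (Set.mem_univ m)
    (div_nonneg (by linarith) hma.le) (div_nonneg (by linarith) hma.le) hcoeff
  have hpt : ((m - u) / (m - a)) • a + ((u - a) / (m - a)) • m = u := by
    simp only [smul_eq_mul]
    field_simp
    ring
  rw [hpt] at h
  simpa using h

lemma conc_left {f : ℝ → ℝ} (hf : ConcaveOn ℝ Set.univ f) {a b c t : ℝ} (hab : a < b)
    (hac : a ≤ c) (hcb : c < b) (hta : t < f a) (htb : t ≤ f b) : t < f c := by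
  have hba : (0:ℝ) < b - a := by linarith
  have h := conc_combo f hf hab hac hcb.le
  have hα : 0 < (b - c) / (b - a) := div_pos (by linarith) hba
  have hβ : 0 ≤ (c - a) / (b - a) := div_nonneg (by linarith) hba.le
  have hsum : (b - c) / (b - a) + (c - a) / (b - a) = 1 := by field_simp; ring
  have e1 : (b - c) / (b - a) * t < (b - c) / (b - a) * f a := by
    exact mul_lt_mul_of_pos_left hta hα
  have e2 : (c - a) / (b - a) * t ≤ (c - a) / (b - a) * f b :=
    mul_le_mul_of_nonneg_left htb hβ
  have e3 : (b - c) / (b - a) * t + (c - a) / (b - a) * t = t := by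
    rw [← add_mul, hsum, one_mul]
  linarith

lemma conc_right {f : ℝ → ℝ} (hf : ConcaveOn ℝ Set.univ f) {a b c t : ℝ} (hab : a < b)
    (hac : a < c) (hcb : c ≤ b) (hta : t ≤ f a) (htb : t < f b) : t < f c := by
  have hba : (0:ℝ) < b - a := by linarith
  have h := conc_combo f hf hab hac.le hcb
  have hα : 0 ≤ (b - c) / (b - a) := div_nonneg (by linarith) hba.le
  have hβ : 0 < (c - a) / (b - a) := div_pos (by linarith) hba
  have hsum : (b - c) / (b - a) + (c - a) / (b - a) = 1 := by field_simp; ring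
  have e1 : (b - c) / (b - a) * t ≤ (b - c) / (b - a) * f a :=
    mul_le_mul_of_nonneg_left hta hα
  have e2 : (c - a) / (b - a) * t < (c - a) / (b - a) * f b :=
    mul_lt_mul_of_pos_left htb hβ
  have e3 : (b - c) / (b - a) * t + (c - a) / (b - a) * t = t := by
    rw [← add_mul, hsum, one_mul]
  linarith

lemma conc_deriv_ge_slope {f : ℝ → ℝ} (hf : ConcaveOn ℝ Set.univ f) {a m d : ℝ}
    (ham : a < m) (hd : HasDerivAt f d a) : (f m - f a) / (m - a) ≤ d := by
  have hma : (0:ℝ) < m - a := by linarith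
  have ht : Tendsto (slope f a) (𝓝[>] a) (𝓝 d) :=
    (hasDerivAt_iff_tendsto_slope.mp hd).mono_left
      (nhdsWithin_mono _ (fun x hx => ne_of_gt hx))
  refine ge_of_tendsto ht ?_
  filter_upwards [Ioo_mem_nhdsGT ham] with u hu
  have hua : (0:ℝ) < u - a := by linarith [hu.1]
  have h := conc_combo f hf ham hu.1.le hu.2.le
  have h' : (m - u) * f a + (u - a) * f m ≤ (m - a) * f u := by
    have hc : (m - u) / (m - a) * f a + (u - a) / (m - a) * f m
        = ((m - u) * f a + (u - a) * f m) / (m - a) := by ring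
    rw [hc, div_le_iff₀ hma] at h
    linarith [h]
  rw [slope_def_field, div_le_div_iff₀ hma hua]
  nlinarith [h']

lemma conc_deriv_le_slope {f : ℝ → ℝ} (hf : ConcaveOn ℝ Set.univ f) {a m d : ℝ}
    (hma : m < a) (hd : HasDerivAt f d a) : d ≤ (f a - f m) / (a - m) := by
  have ham : (0:ℝ) < a - m := by linarith
  have ht : Tendsto (slope f a) (𝓝[<] a) (𝓝 d) :=
    (hasDerivAt_iff_tendsto_slope.mp hd).mono_left
      (nhdsWithin_mono _ (fun x hx => ne_of_lt hx))
  refine le_of_tendsto ht ?_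
  filter_upwards [Ioo_mem_nhdsLT hma] with u hu
  have hua : (0:ℝ) < a - u := by linarith [hu.2]
  have h := conc_combo f hf (show m < a by linarith) hu.1.le hu.2.le
  have h' : (a - u) * f m + (u - m) * f a ≤ (a - m) * f u := by
    have hc : (a - u) / (a - m) * f m + (u - m) / (a - m) * f a
        = ((a - u) * f m + (u - m) * f a) / (a - m) := by ring
    rw [hc, div_le_iff₀ ham] at h
    linarith [h]
  have hsl : slope f a u = (f a - f u) / (a - u) := by
    rw [slope_def_field, ← neg_div_neg_eq]
    congr 1 <;> ring
  rw [hsl, div_le_div_iff₀ hua ham]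
  nlinarith [h']

lemma deriv_nonpos_of_maxOn_left {f : ℝ → ℝ} {d a b : ℝ} (hd : HasDerivAt f d a)
    (hab : a < b) (hmax : ∀ t ∈ Set.Icc a b, f t ≤ f a) : d ≤ 0 := by
  have ht : Tendsto (slope f a) (𝓝[>] a) (𝓝 d) :=
    (hasDerivAt_iff_tendsto_slope.mp hd).mono_left
      (nhdsWithin_mono _ (fun x hx => ne_of_gt hx))
  refine le_of_tendsto ht ?_
  filter_upwards [Ioo_mem_nhdsGT hab] with u hu
  rw [slope_def_field]
  apply div_nonpos_of_nonpos_of_nonneg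
  · have := hmax u ⟨hu.1.le, hu.2.le⟩
    linarith
  · linarith [hu.1]

lemma deriv_nonneg_of_maxOn_right {f : ℝ → ℝ} {d a b : ℝ} (hd : HasDerivAt f d b)
    (hab : a < b) (hmax : ∀ t ∈ Set.Icc a b, f t ≤ f b) : 0 ≤ d := by
  have ht : Tendsto (slope f b) (𝓝[<] b) (𝓝 d) :=
    (hasDerivAt_iff_tendsto_slope.mp hd).mono_left
      (nhdsWithin_mono _ (fun x hx => ne_of_lt hx))
  refine ge_of_tendsto ht ?_
  filter_upwards [Ioo_mem_nhdsLT hab] with u hu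
  rw [slope_def_field]
  have h1 : f u - f b ≤ 0 := by have := hmax u ⟨hu.1.le, hu.2.le⟩; linarith
  have h2 : u - b < 0 := by linarith [hu.2]
  exact div_nonneg_of_nonpos h1 h2.le

end OppAux
namespace OppAux
set_option linter.unusedSectionVars false
set_option maxHeartbeats 1000000
open Real Filter Set Topology

variable {Y : Type*} [Fintype Y] {n : ℕ}

lemma convBound (p₀ p₁ : Fin n → Y → ℝ)
    (h₀ : ∀ i, IsPMF (p₀ i)) (h₁ : ∀ i, IsPMF (p₁ i))
    (hsupp : ∀ i, CommonSupport (p₀ i) (p₁ i))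
    {L : ℝ} (hL : 0 ≤ L)
    (hratio : ∀ i v, p₀ i v ≠ 0 → p₁ i v ≠ 0 →
      |Real.log (p₀ i v) - Real.log (p₁ i v)| ≤ L)
    (T : (Fin n → Y) → Prop) [DecidablePred T]
    {s₀ : ℝ} (hs₀0 : 0 ≤ s₀) (hs₀1 : s₀ ≤ 1)
    (hmax : ∀ s ∈ Set.Icc (0:ℝ) 1, dC (pd p₀) (pd p₁) s ≤ dC (pd p₀) (pd p₁) s₀) :
    (1/2) * Real.exp (-(dC (pd p₀) (pd p₁) s₀) - Real.sqrt (2*n) * L)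
      ≤ (∑ y : Fin n → Y, if T y then pd p₀ y else 0)
        + (∑ y : Fin n → Y, if T y then 0 else pd p₁ y) := by
  classical
  have hp0 : ∀ y, 0 ≤ pd p₀ y := fun y => Finset.prod_nonneg fun i _ => (h₀ i).1 _
  have hp1 : ∀ y, 0 ≤ pd p₁ y := fun y => Finset.prod_nonneg fun i _ => (h₁ i).1 _
  have hPsuppPd : CommonSupport (pd p₀) (pd p₁) := commonSupport_pd hsupp
  set c := cherSum (pd p₀) (pd p₁) s₀ with hcdef
  have hc : 0 < c := cherSum_pos hp0 hp1 hPsuppPd s₀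
  set qi : Fin n → Y → ℝ := fun i => tilted (p₀ i) (p₁ i) s₀ with hqidef
  have hqi : ∀ i, IsPMF (qi i) := fun i =>
    ⟨tilted_nonneg (h₀ i).1 (h₁ i).1 (hsupp i) s₀,
     sum_tilted (h₀ i).1 (h₁ i).1 (hsupp i) s₀⟩
  set Qs : (Fin n → Y) → ℝ := pd qi with hQsdef
  have hQs0 : ∀ y, 0 ≤ Qs y := fun y => Finset.prod_nonneg fun i _ => (hqi i).1 _
  have hQssum : ∑ y : Fin n → Y, Qs y = 1 := sum_pd hqi
  have hQs_tilted : ∀ y, tilted (pd p₀) (pd p₁) s₀ y = Qs y := fun y =>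
    tilted_pd (fun i v => (h₀ i).1 v) (fun i v => (h₁ i).1 v) s₀ y
  set ℓi : Fin n → Y → ℝ := fun i v => Real.log (p₀ i v) - Real.log (p₁ i v) with hℓidef
  set ℓ : (Fin n → Y) → ℝ := fun y => ∑ i, ℓi i (y i) with hℓdef
  set mbar : ℝ := ∑ i, ∑ v, qi i v * ℓi i v with hmbardef
  have hmean : ∑ y : Fin n → Y, Qs y * ℓ y = mbar := mean_eq hqi ℓi
  have hQs_letter : ∀ y, Qs y ≠ 0 → ∀ i, qi i (y i) ≠ 0 := by
    intro y hy i hi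
    exact hy (Finset.prod_eq_zero (Finset.mem_univ i) hi)
  have hQs_pos_letters : ∀ y, Qs y ≠ 0 → ∀ i, p₀ i (y i) ≠ 0 ∧ p₁ i (y i) ≠ 0 := by
    intro y hy i
    exact tilted_ne_zero (hQs_letter y hy i)
  have hlogsum : ∀ y, Qs y ≠ 0 → ℓ y = Real.log (pd p₀ y) - Real.log (pd p₁ y) := by
    intro y hy
    rw [hℓdef]
    simp only
    rw [pd, pd, Real.log_prod (fun i _ => (hQs_pos_letters y hy i).1),
      Real.log_prod (fun i _ => (hQs_pos_letters y hy i).2), ← Finset.sum_sub_distrib]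
  -- mbar equals the derivative of dC at s₀
  have hmbar_deriv : mbar = dCd (pd p₀) (pd p₁) s₀ := by
    rw [← sum_tilted_mul_log, ← hmean]
    refine Finset.sum_congr rfl fun y _ => ?_
    by_cases hy : Qs y = 0
    · rw [hQs_tilted y, hy, zero_mul, zero_mul]
    · rw [hQs_tilted y, hlogsum y hy]
  have hF := hasDerivAt_dC hp0 hp1 hPsuppPd
  -- sign conditions at the maximizer
  have hsign : 0 ≤ s₀ * mbar ∧ (1 - s₀) * mbar ≤ 0 := by
    rcases eq_or_lt_of_le hs₀0 with h0 | h0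
    · have hd : dCd (pd p₀) (pd p₁) s₀ ≤ 0 := by
        refine deriv_nonpos_of_maxOn_left (b := 1) (hF s₀) (by rw [← h0]; norm_num) ?_
        intro t ht
        rw [← h0] at ht
        exact hmax t ht
      refine ⟨by rw [← h0, zero_mul], ?_⟩
      rw [hmbar_deriv]
      nlinarith [hd, hs₀1]
    rcases eq_or_lt_of_le hs₀1 with h1 | h1
    · have hd : 0 ≤ dCd (pd p₀) (pd p₁) s₀ := by
        refine deriv_nonneg_of_maxOn_right (a := 0) (hF s₀) (by rw [h1]; norm_num) ?_
        intro t ht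
        rw [h1] at ht
        exact hmax t ht
      refine ⟨?_, by rw [h1, sub_self, zero_mul]⟩
      rw [hmbar_deriv]
      exact mul_nonneg hs₀0 hd
    · have hloc : IsLocalMax (dC (pd p₀) (pd p₁)) s₀ := by
        have hmem : Set.Icc (0:ℝ) 1 ∈ 𝓝 s₀ := Icc_mem_nhds h0 h1
        exact IsMaxOn.isLocalMax (fun t ht => hmax t ht) hmem
      have hz : dCd (pd p₀) (pd p₁) s₀ = 0 := by
        rw [← (hF s₀).deriv]
        exact hloc.deriv_eq_zero
      rw [hmbar_deriv, hz, mul_zero, mul_zero]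
      exact ⟨le_refl 0, le_refl 0⟩
  set r : ℝ := Real.sqrt (2*n) * L with hrdef
  have hr0 : 0 ≤ r := mul_nonneg (Real.sqrt_nonneg _) hL
  have hr2 : r ^ 2 = 2 * n * L ^ 2 := by
    rw [hrdef, mul_pow, Real.sq_sqrt (by positivity)]
  set A : (Fin n → Y) → Prop := fun y => |ℓ y - mbar| ≤ r with hAdef
  have hbound : ∀ i v, qi i v ≠ 0 → |ℓi i v| ≤ L := by
    intro i v hv
    obtain ⟨h0', h1'⟩ := tilted_ne_zero hv
    exact hratio i v h0' h1'
  have hvar : ∑ y : Fin n → Y, Qs y * (ℓ y - mbar) ^ 2 ≤ n * L ^ 2 := by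
    have := var_le hqi ℓi hL hbound
    exact this
  -- Chebyshev
  have hcheb : (1:ℝ)/2 ≤ ∑ y : Fin n → Y, if A y then Qs y else 0 := by
    have hsplit : (∑ y : Fin n → Y, if A y then Qs y else 0)
        + (∑ y : Fin n → Y, if A y then 0 else Qs y) = 1 := by
      rw [← Finset.sum_add_distrib, ← hQssum]
      refine Finset.sum_congr rfl fun y _ => ?_
      by_cases hy : A y <;> simp [hy]
    have htail : (∑ y : Fin n → Y, if A y then 0 else Qs y) ≤ 1/2 := by
      by_cases hrpos : 0 < r
      · have hstep : ∀ y, (if A y then 0 else Qs y) ≤ Qs y * (ℓ y - mbar)^2 / r^2 := by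
          intro y
          by_cases hy : A y
          · rw [if_pos hy]
            exact div_nonneg (mul_nonneg (hQs0 y) (sq_nonneg _)) (sq_nonneg _)
          · rw [if_neg hy]
            have habs : r < |ℓ y - mbar| := not_le.mp hy
            have h1 : r^2 < (ℓ y - mbar)^2 := by
              calc r^2 = |r|^2 := by rw [abs_of_nonneg hr0]
                _ < |ℓ y - mbar|^2 := by
                    apply pow_lt_pow_left₀ (by rwa [abs_of_nonneg hr0]) (abs_nonneg _)
                    norm_num
                _ = (ℓ y - mbar)^2 := sq_abs _
            rw [le_div_iff₀ (pow_pos hrpos 2)]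
            exact mul_le_mul_of_nonneg_left h1.le (hQs0 y)
        calc (∑ y : Fin n → Y, if A y then 0 else Qs y)
            ≤ ∑ y : Fin n → Y, Qs y * (ℓ y - mbar)^2 / r^2 :=
              Finset.sum_le_sum fun y _ => hstep y
          _ = (∑ y : Fin n → Y, Qs y * (ℓ y - mbar)^2) / r^2 := by
              rw [Finset.sum_div]
          _ ≤ (n * L^2) / r^2 := by
              apply div_le_div_of_nonneg_right hvar (by positivity) |>.trans_eq rfl
          _ ≤ 1/2 := by
              rw [div_le_div_iff₀ (by positivity) (by norm_num)]
              rw [hr2] at *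
              nlinarith [hr2, sq_nonneg r, hrpos]
      · -- r = 0 : then every supported y is in A
        have hre : r = 0 := le_antisymm (not_lt.mp hrpos) hr0
        have hall : ∀ y, Qs y ≠ 0 → A y := by
          intro y hy
          have hL0 : ∀ i, ℓi i (y i) = 0 ∨ n = 0 := by
            intro i
            rcases mul_eq_zero.mp (by rw [← hrdef]; exact hre) with hs | hl
            · right
              have h2n : (2:ℝ) * n = 0 := by
                have := Real.sqrt_eq_zero'.mp hs
                nlinarith [this, Real.sqrt_nonneg ((2:ℝ)*n)]
              have : (n:ℝ) = 0 := by linarith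
              exact_mod_cast this
            · left
              have := hbound i (y i) (hQs_letter y hy i)
              rw [hl] at this
              exact abs_eq_zero.mp (le_antisymm this (abs_nonneg _))
          -- in both cases ℓ y = 0 and mbar = 0
          rcases Nat.eq_zero_or_pos n with hn0 | hnpos
          · have h1 : ℓ y = 0 := by
              rw [hℓdef]
              simp only
              apply Finset.sum_eq_zero
              intro i _
              exact absurd i.isLt (by omega)
            have h2 : mbar = 0 := by
              rw [hmbardef]
              apply Finset.sum_eq_zero
              intro i _
              exact absurd i.isLt (by omega)
            rw [hAdef]
            simp only
            rw [h1, h2, hre]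
            simp
          · have hLzero : L = 0 ∨ False := by
              rcases mul_eq_zero.mp (by rw [← hrdef]; exact hre) with hs | hl
              · exfalso
                have h2n : Real.sqrt (2*n) > 0 := Real.sqrt_pos.mpr (by positivity)
                rw [hs] at h2n
                exact lt_irrefl 0 h2n
              · exact Or.inl hl
            rcases hLzero with hLzero | hf
            · have h1 : ℓ y = 0 := by
                rw [hℓdef]
                simp only
                apply Finset.sum_eq_zero
                intro i _
                have := hbound i (y i) (hQs_letter y hy i)
                rw [hLzero] at this
                exact abs_eq_zero.mp (le_antisymm this (abs_nonneg _))
              have h2 : mbar = 0 := by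
                rw [hmbardef]
                apply Finset.sum_eq_zero
                intro i _
                apply Finset.sum_eq_zero
                intro v _
                by_cases hv : qi i v = 0
                · rw [hv, zero_mul]
                · have := hbound i v hv
                  rw [hLzero] at this
                  rw [abs_eq_zero.mp (le_antisymm this (abs_nonneg _)), mul_zero]
              rw [hAdef]
              simp only
              rw [h1, h2, hre]
              simp
            · exact absurd hf id
        have : (∑ y : Fin n → Y, if A y then 0 else Qs y) = 0 := by
          apply Finset.sum_eq_zero
          intro y _
          by_cases hy : A y
          · rw [if_pos hy]
          · rw [if_neg hy]
            by_contra hne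
            exact hy (hall y hne)
        rw [this]; norm_num
    linarith
  -- change of measure identities
  have hkey : ∀ y, Qs y ≠ 0 →
      pd p₀ y = Qs y * c * Real.exp (s₀ * ℓ y)
      ∧ pd p₁ y = Qs y * c * Real.exp (-(1 - s₀) * ℓ y) := by
    intro y hy
    have hpd0 : 0 < pd p₀ y := by
      rw [pd]
      apply Finset.prod_pos
      intro i _
      exact lt_of_le_of_ne ((h₀ i).1 _) (Ne.symm (hQs_pos_letters y hy i).1)
    have hpd1 : 0 < pd p₁ y := by
      rw [pd]
      apply Finset.prod_pos
      intro i _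
      exact lt_of_le_of_ne ((h₁ i).1 _) (Ne.symm (hQs_pos_letters y hy i).2)
    have hterm : termf (pd p₀) (pd p₁) s₀ y = Qs y * c := by
      have := hQs_tilted y
      rw [tilted_eq] at this
      rw [div_eq_iff (ne_of_gt hc)] at this
      linarith [this]
    have htermval : termf (pd p₀) (pd p₁) s₀ y
        = Real.exp ((1 - s₀) * Real.log (pd p₀ y) + s₀ * Real.log (pd p₁ y)) := by
      rw [termf, if_neg (by push_neg; exact ⟨ne_of_gt hpd0, ne_of_gt hpd1⟩),
        Real.rpow_def_of_pos hpd0, Real.rpow_def_of_pos hpd1, ← Real.exp_add]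
      ring_nf
    have hℓy := hlogsum y hy
    constructor
    · rw [← hterm, htermval, ← Real.exp_add, hℓy]
      rw [show (1 - s₀) * Real.log (pd p₀ y) + s₀ * Real.log (pd p₁ y)
          + s₀ * (Real.log (pd p₀ y) - Real.log (pd p₁ y)) = Real.log (pd p₀ y) by ring]
      rw [Real.exp_log hpd0]
    · rw [← hterm, htermval, ← Real.exp_add, hℓy]
      rw [show (1 - s₀) * Real.log (pd p₀ y) + s₀ * Real.log (pd p₁ y)
          + -(1 - s₀) * (Real.log (pd p₀ y) - Real.log (pd p₁ y)) = Real.log (pd p₁ y) by ring]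
      rw [Real.exp_log hpd1]
  -- exponent lower bounds on A
  have hexp0 : ∀ y, A y → Real.exp (-r) ≤ Real.exp (s₀ * ℓ y) := by
    intro y hy
    apply Real.exp_le_exp.mpr
    have h1 : mbar - r ≤ ℓ y := by
      have := abs_le.mp hy
      linarith [this.1]
    have h2 : s₀ * (mbar - r) ≤ s₀ * ℓ y := mul_le_mul_of_nonneg_left h1 hs₀0
    have h3 : s₀ * r ≤ r := by nlinarith
    nlinarith [hsign.1]
  have hexp1 : ∀ y, A y → Real.exp (-r) ≤ Real.exp (-(1 - s₀) * ℓ y) := by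
    intro y hy
    apply Real.exp_le_exp.mpr
    have h1 : ℓ y ≤ mbar + r := by
      have := abs_le.mp hy
      linarith [this.2]
    have h2 : -(1 - s₀) * ℓ y ≥ -(1 - s₀) * (mbar + r) := by
      apply neg_le_neg at h1
      have : 0 ≤ 1 - s₀ := by linarith
      nlinarith
    have h3 : (1 - s₀) * r ≤ r := by nlinarith
    nlinarith [hsign.2]
  -- assembly
  have hstep0 : ∀ y, (if T y ∧ A y then Qs y * (c * Real.exp (-r)) else 0)
      ≤ (if T y then pd p₀ y else 0) := by
    intro y
    by_cases hTA : T y ∧ A y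
    · rw [if_pos hTA, if_pos hTA.1]
      by_cases hy : Qs y = 0
      · rw [hy, zero_mul]
        exact hp0 y
      · rw [(hkey y hy).1, ← mul_assoc]
        exact mul_le_mul_of_nonneg_left (hexp0 y hTA.2) (mul_nonneg (hQs0 y) hc.le)
    · rw [if_neg hTA]
      by_cases hT : T y
      · rw [if_pos hT]; exact hp0 y
      · rw [if_neg hT]
  have hstep1 : ∀ y, (if ¬ T y ∧ A y then Qs y * (c * Real.exp (-r)) else 0)
      ≤ (if T y then 0 else pd p₁ y) := by
    intro y
    by_cases hTA : ¬ T y ∧ A y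
    · rw [if_pos hTA, if_neg hTA.1]
      by_cases hy : Qs y = 0
      · rw [hy, zero_mul]
        exact hp1 y
      · rw [(hkey y hy).2, ← mul_assoc]
        exact mul_le_mul_of_nonneg_left (hexp1 y hTA.2) (mul_nonneg (hQs0 y) hc.le)
    · rw [if_neg hTA]
      by_cases hT : T y
      · rw [if_pos hT]
      · rw [if_neg hT]; exact hp1 y
  have hsum2 : ∀ y, (if T y ∧ A y then Qs y * (c * Real.exp (-r)) else 0)
      + (if ¬ T y ∧ A y then Qs y * (c * Real.exp (-r)) else 0)
      = (if A y then Qs y else 0) * (c * Real.exp (-r)) := by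
    intro y
    by_cases hA : A y
    · by_cases hT : T y
      · rw [if_pos ⟨hT, hA⟩, if_neg (by tauto), if_pos hA, add_zero]
      · rw [if_neg (by tauto), if_pos ⟨hT, hA⟩, if_pos hA, zero_add]
    · rw [if_neg (by tauto), if_neg (by tauto), if_neg hA, zero_mul, add_zero]
  have hfinal : (1/2) * (c * Real.exp (-r))
      ≤ (∑ y : Fin n → Y, if T y then pd p₀ y else 0)
        + (∑ y : Fin n → Y, if T y then 0 else pd p₁ y) := by
    calc (1/2) * (c * Real.exp (-r))
        ≤ (∑ y : Fin n → Y, if A y then Qs y else 0) * (c * Real.exp (-r)) := by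
          apply mul_le_mul_of_nonneg_right hcheb (by positivity)
      _ = ∑ y : Fin n → Y, ((if T y ∧ A y then Qs y * (c * Real.exp (-r)) else 0)
            + (if ¬ T y ∧ A y then Qs y * (c * Real.exp (-r)) else 0)) := by
          rw [Finset.sum_mul]
          refine Finset.sum_congr rfl fun y _ => (hsum2 y).symm
      _ = (∑ y : Fin n → Y, if T y ∧ A y then Qs y * (c * Real.exp (-r)) else 0)
            + (∑ y : Fin n → Y, if ¬ T y ∧ A y then Qs y * (c * Real.exp (-r)) else 0) :=
          Finset.sum_add_distrib
      _ ≤ (∑ y : Fin n → Y, if T y then pd p₀ y else 0)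
            + (∑ y : Fin n → Y, if T y then 0 else pd p₁ y) := by
          apply add_le_add
          · exact Finset.sum_le_sum fun y _ => hstep0 y
          · exact Finset.sum_le_sum fun y _ => hstep1 y
  have hcexp : c * Real.exp (-r) = Real.exp (-(dC (pd p₀) (pd p₁) s₀) - r) := by
    rw [show -(dC (pd p₀) (pd p₁) s₀) - r = -(dC (pd p₀) (pd p₁) s₀) + (-r) by ring,
      Real.exp_add]
    congr 1
    rw [dC, neg_neg, Real.exp_log hc]
  rw [hcexp] at hfinal
  exact hfinal

end OppAux
namespace OppAux
set_option linter.unusedSectionVars false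
set_option maxHeartbeats 1000000
open Real Filter Set Topology

lemma pmf_le_one {α : Type*} [Fintype α] {p : α → ℝ} (hp : IsPMF p) (x : α) : p x ≤ 1 := by
  have := Finset.single_le_sum (f := p) (fun i _ => hp.1 i) (Finset.mem_univ x)
  rw [hp.2] at this
  exact this

lemma pmf_commonSupport_self {α : Type*} [Fintype α] {p : α → ℝ} (hp : IsPMF p) :
    CommonSupport p p := by
  by_contra hc
  have hall : ∀ x, p x = 0 := by
    intro x
    by_contra hx
    exact hc ⟨x, hx, hx⟩
  have : ∑ x, p x = 0 := Finset.sum_eq_zero fun x _ => hall x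
  rw [hp.2] at this
  norm_num at this

lemma log_ratio_bound {pmin a b : ℝ} (hpos : 0 < pmin) (ha : pmin ≤ a) (ha1 : a ≤ 1)
    (hb : pmin ≤ b) (hb1 : b ≤ 1) :
    |Real.log a - Real.log b| ≤ Real.log (1 / pmin) := by
  have hA : 0 < a := lt_of_lt_of_le hpos ha
  have hB : 0 < b := lt_of_lt_of_le hpos hb
  have h1 : Real.log pmin ≤ Real.log a := Real.log_le_log hpos ha
  have h2 : Real.log a ≤ 0 := Real.log_nonpos hA.le ha1
  have h3 : Real.log pmin ≤ Real.log b := Real.log_le_log hpos hb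
  have h4 : Real.log b ≤ 0 := Real.log_nonpos hB.le hb1
  rw [one_div, Real.log_inv]
  rw [abs_le]
  constructor <;> linarith

lemma errProb_eq {Y Z : Type*} [Fintype Y] [Fintype Z] {n : ℕ}
    (P : Bool → Y → ℝ) (Q : Bool → Z → ℝ) (pr : DetProtocol Y Z n) (b : Bool) :
    errProb P Q pr b = ∑ y : Fin n → Y, prodDist P (pr.x b) y * decProb Q pr.dec (!b) (pr.W y) := by
  unfold errProb decProb
  refine Finset.sum_congr rfl fun y _ => ?_
  rw [Finset.mul_sum]
  refine Finset.sum_congr rfl fun z _ => by ring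

lemma decProb_nonneg {Z : Type*} [Fintype Z] {n : ℕ} {Q : Bool → Z → ℝ} (hQ : IsChannel Q)
    (dec : (Fin n → Z) → Bool) (b : Bool) (w : Fin n → Bool) : 0 ≤ decProb Q dec b w := by
  unfold decProb
  apply Finset.sum_nonneg
  intro z _
  apply mul_nonneg
  · exact Finset.prod_nonneg fun i _ => (hQ (w i)).1 _
  · split <;> norm_num

lemma sum_prodDist {Y : Type*} [Fintype Y] {n : ℕ} {X : Type*} (P : X → Y → ℝ)
    (hP : ∀ x, IsPMF (P x)) (w : Fin n → X) : ∑ y : Fin n → Y, prodDist P w y = 1 := by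
  exact sum_pd (q := fun i => P (w i)) (fun i => hP (w i))

lemma decProb_add {Z : Type*} [Fintype Z] {n : ℕ} {Q : Bool → Z → ℝ} (hQ : IsChannel Q)
    (dec : (Fin n → Z) → Bool) (w : Fin n → Bool) :
    decProb Q dec false w + decProb Q dec true w = 1 := by
  unfold decProb
  rw [← Finset.sum_add_distrib]
  have h1 : ∀ z ∈ Finset.univ, prodDist Q w z * (if dec z = false then (1:ℝ) else 0)
      + prodDist Q w z * (if dec z = true then (1:ℝ) else 0) = prodDist Q w z := by
    intro z _
    cases hz : dec z <;> simp [hz]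
  rw [Finset.sum_congr rfl h1]
  exact sum_prodDist Q (fun b => hQ b) w

/-- the "move towards a better point" contradiction. -/
lemma move_lemma {g h : ℝ → ℝ} (hgc : Continuous g) (hhconc : ConcaveOn ℝ Set.univ h)
    {E s σ : ℝ} (hs : s ∈ Set.Icc (0:ℝ) 1) (hσ : σ ∈ Set.Icc (0:ℝ) 1)
    (hgs : E < g s) (hhs : E ≤ h s) (hhσ : E < h σ)
    (hcontra : ∀ u ∈ Set.Icc (0:ℝ) 1, E < g u → E < h u → False) : False := by
  by_cases heq : σ = s
  · exact hcontra s hs hgs (heq ▸ hhσ)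
  have hD : σ - s ≠ 0 := fun hc => heq (by linarith [sub_eq_zero.mp hc])
  have hDpos : 0 < |σ - s| := abs_pos.mpr hD
  -- continuity ball
  have hnhds : g ⁻¹' (Set.Ioi E) ∈ 𝓝 s := hgc.continuousAt (Ioi_mem_nhds hgs)
  obtain ⟨δ, hδpos, hball⟩ := Metric.mem_nhds_iff.mp hnhds
  set lam : ℝ := min (1/2) (δ / (2 * |σ - s|)) with hlam
  have hlam0 : 0 < lam := lt_min (by norm_num) (by positivity)
  have hlam1 : lam ≤ 1/2 := min_le_left _ _
  set u : ℝ := s + lam * (σ - s) with hu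
  have humem : u ∈ Set.Icc (0:ℝ) 1 := by
    constructor
    · rcases le_total s σ with hss | hss
      · nlinarith [hs.1, hσ.1]
      · nlinarith [hs.1, hσ.1]
    · rcases le_total s σ with hss | hss
      · nlinarith [hs.2, hσ.2]
      · nlinarith [hs.2, hσ.2]
  have hgu : E < g u := by
    apply hball
    rw [Metric.mem_ball, Real.dist_eq]
    have : |u - s| = lam * |σ - s| := by
      rw [hu]
      rw [show s + lam * (σ - s) - s = lam * (σ - s) by ring, abs_mul,
        abs_of_pos hlam0]
    rw [this]
    have h2 : lam ≤ δ / (2 * |σ - s|) := min_le_right _ _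
    calc lam * |σ - s| ≤ δ / (2 * |σ - s|) * |σ - s| :=
        mul_le_mul_of_nonneg_right h2 (abs_nonneg _)
      _ = δ / 2 := by field_simp
      _ < δ := by linarith
  have hhu : E < h u := by
    rcases lt_or_gt_of_ne (fun hc => heq hc.symm) with hlt | hgt
    · -- s < σ : use conc_right with a = s, b = σ, c = u
      refine conc_right hhconc hlt ?_ ?_ hhs hhσ
      · rw [hu]; nlinarith
      · rw [hu]; nlinarith
    · -- σ < s : conc_left with a = σ, b = s, c = u
      refine conc_left hhconc hgt ?_ ?_ hhσ hhs
      · rw [hu]; nlinarith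
      · rw [hu]; nlinarith
  exact hcontra u humem hgu hhu

/-- conflict: two exceedance points on the same (right) side of the anchor. -/
lemma confl_right {g h : ℝ → ℝ} (hg : ConcaveOn ℝ Set.univ g) (hh : ConcaveOn ℝ Set.univ h)
    {E s σ τ : ℝ} (hgs : E ≤ g s) (hhs : E ≤ h s)
    (hσ : σ ∈ Set.Icc (0:ℝ) 1) (hτ : τ ∈ Set.Icc (0:ℝ) 1)
    (hσs : s < σ) (hτs : s < τ) (hgσ : E < g σ) (hhτ : E < h τ)
    (hcontra : ∀ u ∈ Set.Icc (0:ℝ) 1, E < g u → E < h u → False) : False := by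
  set u := min σ τ with hudef
  have humem : u ∈ Set.Icc (0:ℝ) 1 :=
    ⟨le_min hσ.1 hτ.1, le_trans (min_le_left _ _) hσ.2⟩
  have hsu : s < u := lt_min hσs hτs
  have hgu : E < g u := by
    rcases eq_or_lt_of_le (min_le_left σ τ : u ≤ σ) with he | hl
    · rwa [← he] at hgσ
    · exact conc_right hg (lt_trans hsu hl) hsu hl.le hgs hgσ
  have hhu : E < h u := by
    rcases eq_or_lt_of_le (min_le_right σ τ : u ≤ τ) with he | hl
    · rwa [← he] at hhτ
    · exact conc_right hh (lt_trans hsu hl) hsu hl.le hhs hhτ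
  exact hcontra u humem hgu hhu

/-- conflict: two exceedance points on the same (left) side of the anchor. -/
lemma confl_left {g h : ℝ → ℝ} (hg : ConcaveOn ℝ Set.univ g) (hh : ConcaveOn ℝ Set.univ h)
    {E s σ τ : ℝ} (hgs : E ≤ g s) (hhs : E ≤ h s) (hs1 : s ≤ 1)
    (hσ : σ ∈ Set.Icc (0:ℝ) 1) (hτ : τ ∈ Set.Icc (0:ℝ) 1)
    (hσs : σ < s) (hτs : τ < s) (hgσ : E < g σ) (hhτ : E < h τ)
    (hcontra : ∀ u ∈ Set.Icc (0:ℝ) 1, E < g u → E < h u → False) : False := by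
  set u := max σ τ with hudef
  have humem : u ∈ Set.Icc (0:ℝ) 1 :=
    ⟨le_trans hσ.1 (le_max_left _ _), le_trans (max_le hσs.le hτs.le) hs1⟩
  have hsu : u < s := max_lt hσs hτs
  have hgu : E < g u := by
    rcases eq_or_lt_of_le (le_max_left σ τ : σ ≤ u) with he | hl
    · rwa [he] at hgσ
    · exact conc_left hg (lt_trans hl hsu) hl.le hsu hgσ hgs
  have hhu : E < h u := by
    rcases eq_or_lt_of_le (le_max_right σ τ : τ ≤ u) with he | hl
    · rwa [he] at hhτ
    · exact conc_left hh (lt_trans hl hsu) hl.le hsu hhτ hhs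
  exact hcontra u humem hgu hhu

end OppAux
set_option maxHeartbeats 4000000 in
open OppAux in
/-- Lemma 2 of the paper / `lem:opp_assump`. -/
theorem opp_sign_assumption {Y Z : Type*} [Fintype Y] [Fintype Z]
    (P : Bool → Y → ℝ) (Q : Bool → Z → ℝ)
    (hP : IsChannel P) (hQ : IsChannel Q)
    (hPsupp : CommonSupport (P false) (P true))
    (hQsupp : CommonSupport (Q false) (Q true))
    (hPnc : NonConstantOn (fun s => dC (P false) (P true) s))
    (hQnc : NonConstantOn (fun s => dC (Q false) (Q true) s))
    (pmin : ℝ) (hpmin : MinTransPair P Q pmin)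
    (EStar sStar : ℝ)
    (hsStar : sStar ∈ Set.Ioc (0 : ℝ) (1 / 2))
    (hmax : ∀ s ∈ Set.Icc (0 : ℝ) 1, Efun P Q s ≤ Efun P Q sStar)
    (hEStar : EStar = sSup ((fun s : ℝ => Efun P Q s) '' Set.Icc 0 1))
    (hPord : dC (P false) (P true) (1 - sStar) ≤ dC (P false) (P true) sStar)
    (hQord : dC (Q false) (Q true) (1 - sStar) ≤ dC (Q false) (Q true) sStar)
    (hEmin : EStar = min (dC (P false) (P true) sStar) (dC (Q false) (Q true) sStar))
    {n : ℕ} (π : DetProtocol Y Z n)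
    (w1 : Fin n → Bool)
    (hw1 : ∀ w : Fin n → Bool, decProb Q π.dec false w1 ≤ decProb Q π.dec false w)
    (hperr : n * EStar + Real.sqrt (2 * n) * Real.log (1 / pmin) + Real.log 4 <
      - Real.log (errProb P Q π false + errProb P Q π true)) :
    ∃ t : ℝ, (t = sStar ∨ t = 1 - sStar) ∧
      dC' (prodDist P (π.x false)) (prodDist P (π.x true)) t *
        dC' (prodDist Q (fun i => !(w1 i))) (prodDist Q w1) t < 0 ∧
      max (dC (P false) (P true) t) (dC (P false) (P true) (1 - t)) = EStar ∧
      max (dC (Q false) (Q true) t) (dC (Q false) (Q true) (1 - t)) = EStar := by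
  classical
  obtain ⟨hpminpos, hpminex, hpminP, hpminQ⟩ := hpmin
  have hpmin1 : pmin ≤ 1 := by
    rcases hpminex with ⟨b, y, hby⟩ | ⟨b, z, hbz⟩
    · rw [← hby]; exact pmf_le_one (hP b) y
    · rw [← hbz]; exact pmf_le_one (hQ b) z
  set L := Real.log (1 / pmin) with hLdef
  have hL0 : 0 ≤ L := by
    rw [hLdef, one_div, Real.log_inv]
    linarith [Real.log_nonpos hpminpos.le hpmin1]
  set r := Real.sqrt (2 * n) * L with hrdef
  set gp : ℝ → ℝ := fun s => dC (P false) (P true) s with hgpdef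
  set gq : ℝ → ℝ := fun s => dC (Q false) (Q true) s with hgqdef
  obtain ⟨hs0, hs12⟩ := hsStar
  have hsmem : sStar ∈ Set.Icc (0:ℝ) 1 := ⟨hs0.le, by linarith⟩
  have hsmem' : 1 - sStar ∈ Set.Icc (0:ℝ) 1 := ⟨by linarith, by linarith⟩
  have hPord' : gp (1 - sStar) ≤ gp sStar := hPord
  have hQord' : gq (1 - sStar) ≤ gq sStar := hQord
  have hEmin' : EStar = min (gp sStar) (gq sStar) := hEmin
  have hgpnn : ∀ s, s ∈ Set.Icc (0:ℝ) 1 → 0 ≤ gp s := fun s hs =>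
    dC_nonneg (hP false) (hP true) hs.1 hs.2 hPsupp
  have hgqnn : ∀ s, s ∈ Set.Icc (0:ℝ) 1 → 0 ≤ gq s := fun s hs =>
    dC_nonneg (hQ false) (hQ true) hs.1 hs.2 hQsupp
  have hE_le_gp : EStar ≤ gp sStar := by rw [hEmin]; exact min_le_left _ _
  have hE_le_gq : EStar ≤ gq sStar := by rw [hEmin]; exact min_le_right _ _
  have hE0 : 0 ≤ EStar := by
    rw [hEmin]
    exact le_min (hgpnn sStar hsmem) (hgqnn sStar hsmem)
  have hEfun : Efun P Q sStar = EStar := by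
    rw [hEmin']
    show min (max (gp sStar) (gp (1 - sStar))) (max (gq sStar) (gq (1 - sStar)))
        = min (gp sStar) (gq sStar)
    rw [max_eq_left hPord', max_eq_left hQord']
  have hcontra : ∀ u ∈ Set.Icc (0:ℝ) 1, EStar < max (gp u) (gp (1-u)) →
      EStar < max (gq u) (gq (1-u)) → False := by
    intro u hu h1 h2
    have hle := hmax u hu
    rw [hEfun] at hle
    have h3 : EStar < Efun P Q u := lt_min h1 h2
    linarith
  have hgpconc : ConcaveOn ℝ Set.univ gp := concaveOn_dC (hP false).1 (hP true).1 hPsupp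
  have hgqconc : ConcaveOn ℝ Set.univ gq := concaveOn_dC (hQ false).1 (hQ true).1 hQsupp
  have hgpcont : Continuous gp := continuous_dC (hP false).1 (hP true).1 hPsupp
  have hgqcont : Continuous gq := continuous_dC (hQ false).1 (hQ true).1 hQsupp
  -- ============ hop 1 ============
  set p₀ : Fin n → Y → ℝ := fun i => P (π.x false i) with hp₀def
  set p₁ : Fin n → Y → ℝ := fun i => P (π.x true i) with hp₁def
  have hp₀pmf : ∀ i, IsPMF (p₀ i) := fun i => hP _
  have hp₁pmf : ∀ i, IsPMF (p₁ i) := fun i => hP _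
  have hsuppP : ∀ i, CommonSupport (p₀ i) (p₁ i) := by
    intro i
    show CommonSupport (P (π.x false i)) (P (π.x true i))
    cases h0 : π.x false i <;> cases h1 : π.x true i
    · exact pmf_commonSupport_self (hP false)
    · exact hPsupp
    · obtain ⟨x, hx1, hx2⟩ := hPsupp
      exact ⟨x, hx2, hx1⟩
    · exact pmf_commonSupport_self (hP true)
  have hratioP : ∀ i v, p₀ i v ≠ 0 → p₁ i v ≠ 0 →
      |Real.log (p₀ i v) - Real.log (p₁ i v)| ≤ L := by
    intro i v h0 h1
    exact log_ratio_bound hpminpos (hpminP _ v h0) (pmf_le_one (hP _) v)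
      (hpminP _ v h1) (pmf_le_one (hP _) v)
  have hpd₀nn : ∀ y, 0 ≤ pd p₀ y := fun y => Finset.prod_nonneg fun i _ => (hp₀pmf i).1 _
  have hpd₁nn : ∀ y, 0 ≤ pd p₁ y := fun y => Finset.prod_nonneg fun i _ => (hp₁pmf i).1 _
  set F : ℝ → ℝ := fun s => dC (pd p₀) (pd p₁) s with hFdef
  have hsuppPd : CommonSupport (pd p₀) (pd p₁) := commonSupport_pd hsuppP
  have hFcont : Continuous F := continuous_dC hpd₀nn hpd₁nn hsuppPd
  have hFconc : ConcaveOn ℝ Set.univ F := concaveOn_dC hpd₀nn hpd₁nn hsuppPd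
  have hFd : ∀ t : ℝ, HasDerivAt F (dCd (pd p₀) (pd p₁) t) t :=
    hasDerivAt_dC hpd₀nn hpd₁nn hsuppPd
  obtain ⟨mF, hmFmem, hmFmax⟩ := isCompact_Icc.exists_isMaxOn
    (Set.nonempty_Icc.mpr (by norm_num : (0:ℝ) ≤ 1)) hFcont.continuousOn
  have hmFmax' : ∀ s ∈ Set.Icc (0:ℝ) 1, F s ≤ F mF := fun s hs => hmFmax hs
  set T1 : (Fin n → Y) → Prop := fun y => 1/2 ≤ decProb Q π.dec true (π.W y) with hT1def
  have hconv1 : (1/2) * Real.exp (-(F mF) - r)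
      ≤ (∑ y : Fin n → Y, if T1 y then pd p₀ y else 0)
        + (∑ y : Fin n → Y, if T1 y then 0 else pd p₁ y) :=
    convBound p₀ p₁ hp₀pmf hp₁pmf hsuppP hL0 hratioP T1 hmFmem.1 hmFmem.2 hmFmax'
  set pe := errProb P Q π false + errProb P Q π true with hpedef
  have hefalse : (1/2) * (∑ y : Fin n → Y, if T1 y then pd p₀ y else 0)
      ≤ errProb P Q π false := by
    rw [errProb_eq, Finset.mul_sum]
    refine Finset.sum_le_sum fun y _ => ?_
    by_cases hT : T1 y
    · rw [if_pos hT]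
      have h2 : prodDist P (π.x false) y = pd p₀ y := rfl
      have hT' : (1:ℝ)/2 ≤ decProb Q π.dec true (π.W y) := hT
      rw [h2]
      simp only [Bool.not_false]
      calc (1/2) * pd p₀ y = pd p₀ y * (1/2) := by ring
        _ ≤ pd p₀ y * decProb Q π.dec true (π.W y) :=
            mul_le_mul_of_nonneg_left hT' (hpd₀nn y)
    · rw [if_neg hT, mul_zero]
      exact mul_nonneg (hpd₀nn y) (decProb_nonneg hQ _ _ _)
  have hetrue : (1/2) * (∑ y : Fin n → Y, if T1 y then 0 else pd p₁ y)
      ≤ errProb P Q π true := by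
    rw [errProb_eq, Finset.mul_sum]
    refine Finset.sum_le_sum fun y _ => ?_
    by_cases hT : T1 y
    · rw [if_pos hT, mul_zero]
      have h2 : prodDist P (π.x true) y = pd p₁ y := rfl
      rw [h2]
      exact mul_nonneg (hpd₁nn y) (decProb_nonneg hQ _ _ _)
    · rw [if_neg hT]
      have h2 : prodDist P (π.x true) y = pd p₁ y := rfl
      have hT' : ¬ ((1:ℝ)/2 ≤ decProb Q π.dec true (π.W y)) := hT
      have h3 : (1:ℝ)/2 ≤ decProb Q π.dec (!true) (π.W y) := by
        simp only [Bool.not_true]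
        have hadd := decProb_add hQ π.dec (π.W y)
        have hlt : decProb Q π.dec true (π.W y) < 1/2 := not_le.mp hT'
        linarith
      rw [h2]
      calc (1/2) * pd p₁ y = pd p₁ y * (1/2) := by ring
        _ ≤ pd p₁ y * decProb Q π.dec (!true) (π.W y) :=
            mul_le_mul_of_nonneg_left h3 (hpd₁nn y)
  have hpe1 : (1/4) * Real.exp (-(F mF) - r) ≤ pe := by
    calc (1/4) * Real.exp (-(F mF) - r)
        = (1/2) * ((1/2) * Real.exp (-(F mF) - r)) := by ring
      _ ≤ (1/2) * ((∑ y : Fin n → Y, if T1 y then pd p₀ y else 0)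
            + (∑ y : Fin n → Y, if T1 y then 0 else pd p₁ y)) := by
          apply mul_le_mul_of_nonneg_left hconv1 (by norm_num)
      _ = (1/2) * (∑ y : Fin n → Y, if T1 y then pd p₀ y else 0)
            + (1/2) * (∑ y : Fin n → Y, if T1 y then 0 else pd p₁ y) := by ring
      _ ≤ pe := add_le_add hefalse hetrue
  -- ============ hop 2 ============
  obtain ⟨w0, -, hw0⟩ := Finset.exists_min_image Finset.univ (decProb Q π.dec true)
    ⟨w1, Finset.mem_univ w1⟩
  set q₀ : Fin n → Z → ℝ := fun i => Q (w0 i) with hq₀def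
  set q₁ : Fin n → Z → ℝ := fun i => Q (w1 i) with hq₁def
  set ν₀ : Fin n → Z → ℝ := fun i => Q (!(w1 i)) with hν₀def
  have hq₀pmf : ∀ i, IsPMF (q₀ i) := fun i => hQ _
  have hq₁pmf : ∀ i, IsPMF (q₁ i) := fun i => hQ _
  have hν₀pmf : ∀ i, IsPMF (ν₀ i) := fun i => hQ _
  have hQpair : ∀ b b' : Bool, CommonSupport (Q b) (Q b') := by
    intro b b'
    cases b <;> cases b'
    · exact pmf_commonSupport_self (hQ false)
    · exact hQsupp
    · obtain ⟨x, hx1, hx2⟩ := hQsupp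
      exact ⟨x, hx2, hx1⟩
    · exact pmf_commonSupport_self (hQ true)
  have hsuppQ : ∀ i, CommonSupport (q₀ i) (q₁ i) := fun i => hQpair _ _
  have hsuppν : ∀ i, CommonSupport (ν₀ i) (q₁ i) := fun i => hQpair _ _
  have hratioQ : ∀ i v, q₀ i v ≠ 0 → q₁ i v ≠ 0 →
      |Real.log (q₀ i v) - Real.log (q₁ i v)| ≤ L := by
    intro i v h0 h1
    exact log_ratio_bound hpminpos (hpminQ _ v h0) (pmf_le_one (hQ _) v)
      (hpminQ _ v h1) (pmf_le_one (hQ _) v)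
  have hqd₀nn : ∀ z, 0 ≤ pd q₀ z := fun z => Finset.prod_nonneg fun i _ => (hq₀pmf i).1 _
  have hqd₁nn : ∀ z, 0 ≤ pd q₁ z := fun z => Finset.prod_nonneg fun i _ => (hq₁pmf i).1 _
  have hνd₀nn : ∀ z, 0 ≤ pd ν₀ z := fun z => Finset.prod_nonneg fun i _ => (hν₀pmf i).1 _
  set D : ℝ → ℝ := fun s => dC (pd q₀) (pd q₁) s with hDdef
  set G : ℝ → ℝ := fun s => dC (pd ν₀) (pd q₁) s with hGdef
  have hsuppQd : CommonSupport (pd q₀) (pd q₁) := commonSupport_pd hsuppQ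
  have hsuppνd : CommonSupport (pd ν₀) (pd q₁) := commonSupport_pd hsuppν
  have hDcont : Continuous D := continuous_dC hqd₀nn hqd₁nn hsuppQd
  have hGcont : Continuous G := continuous_dC hνd₀nn hqd₁nn hsuppνd
  have hGconc : ConcaveOn ℝ Set.univ G := concaveOn_dC hνd₀nn hqd₁nn hsuppνd
  have hGd : ∀ t : ℝ, HasDerivAt G (dCd (pd ν₀) (pd q₁) t) t :=
    hasDerivAt_dC hνd₀nn hqd₁nn hsuppνd
  obtain ⟨mD, hmDmem, hmDmax⟩ := isCompact_Icc.exists_isMaxOn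
    (Set.nonempty_Icc.mpr (by norm_num : (0:ℝ) ≤ 1)) hDcont.continuousOn
  obtain ⟨mG, hmGmem, hmGmax⟩ := isCompact_Icc.exists_isMaxOn
    (Set.nonempty_Icc.mpr (by norm_num : (0:ℝ) ≤ 1)) hGcont.continuousOn
  set T2 : (Fin n → Z) → Prop := fun z => π.dec z = true with hT2def
  have hconv2 : (1/2) * Real.exp (-(D mD) - r)
      ≤ (∑ z : Fin n → Z, if T2 z then pd q₀ z else 0)
        + (∑ z : Fin n → Z, if T2 z then 0 else pd q₁ z) :=
    convBound q₀ q₁ hq₀pmf hq₁pmf hsuppQ hL0 hratioQ T2 hmDmem.1 hmDmem.2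
      (fun s hs => hmDmax hs)
  have hid0 : (∑ z : Fin n → Z, if T2 z then pd q₀ z else 0)
      = decProb Q π.dec true w0 := by
    unfold decProb
    refine Finset.sum_congr rfl fun z _ => ?_
    have h2 : prodDist Q w0 z = pd q₀ z := rfl
    rw [h2]
    rcases Bool.eq_false_or_eq_true (π.dec z) with hz | hz
    · have hT : T2 z := show π.dec z = true from hz
      rw [if_pos hT, hz]
      simp
    · have hT : ¬ T2 z := by
        intro hc
        have h4 : π.dec z = true := hc
        rw [hz] at h4
        exact Bool.false_ne_true h4
      rw [if_neg hT, hz]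
      simp
  have hid1 : (∑ z : Fin n → Z, if T2 z then 0 else pd q₁ z)
      = decProb Q π.dec false w1 := by
    unfold decProb
    refine Finset.sum_congr rfl fun z _ => ?_
    have h2 : prodDist Q w1 z = pd q₁ z := rfl
    rw [h2]
    rcases Bool.eq_false_or_eq_true (π.dec z) with hz | hz
    · have hT : T2 z := show π.dec z = true from hz
      rw [if_pos hT, hz]
      simp
    · have hT : ¬ T2 z := by
        intro hc
        have h4 : π.dec z = true := hc
        rw [hz] at h4
        exact Bool.false_ne_true h4
      rw [if_neg hT, hz]
      simp
  have hpe2' : decProb Q π.dec true w0 + decProb Q π.dec false w1 ≤ pe := by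
    have he0 : decProb Q π.dec true w0 ≤ errProb P Q π false := by
      rw [errProb_eq]
      have hsum1 : ∑ y : Fin n → Y, prodDist P (π.x false) y = 1 :=
        sum_prodDist P (fun b => hP b) _
      calc decProb Q π.dec true w0
          = ∑ y : Fin n → Y, prodDist P (π.x false) y * decProb Q π.dec true w0 := by
            rw [← Finset.sum_mul, hsum1, one_mul]
        _ ≤ ∑ y : Fin n → Y, prodDist P (π.x false) y * decProb Q π.dec (!false) (π.W y) := by
            simp only [Bool.not_false]
            refine Finset.sum_le_sum fun y _ => ?_
            refine mul_le_mul_of_nonneg_left ?_ (hpd₀nn y)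
            exact hw0 (π.W y) (Finset.mem_univ _)
    have he1 : decProb Q π.dec false w1 ≤ errProb P Q π true := by
      rw [errProb_eq]
      have hsum1 : ∑ y : Fin n → Y, prodDist P (π.x true) y = 1 :=
        sum_prodDist P (fun b => hP b) _
      calc decProb Q π.dec false w1
          = ∑ y : Fin n → Y, prodDist P (π.x true) y * decProb Q π.dec false w1 := by
            rw [← Finset.sum_mul, hsum1, one_mul]
        _ ≤ ∑ y : Fin n → Y, prodDist P (π.x true) y * decProb Q π.dec (!true) (π.W y) := by
            simp only [Bool.not_true]
            refine Finset.sum_le_sum fun y _ => ?_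
            refine mul_le_mul_of_nonneg_left ?_ (hpd₁nn y)
            exact hw1 (π.W y)
    rw [hpedef]
    exact add_le_add he0 he1
  have hDG : D mD ≤ G mG := by
    have h1 : D mD ≤ G mD := by
      show dC (pd q₀) (pd q₁) mD ≤ dC (pd ν₀) (pd q₁) mD
      rw [dC_pd (fun i v => (hq₀pmf i).1 v) (fun i v => (hq₁pmf i).1 v) hsuppQ,
        dC_pd (fun i v => (hν₀pmf i).1 v) (fun i v => (hq₁pmf i).1 v) hsuppν]
      refine Finset.sum_le_sum fun i _ => ?_
      show dC (Q (w0 i)) (Q (w1 i)) mD ≤ dC (Q (!(w1 i))) (Q (w1 i)) mD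
      by_cases he : w0 i = w1 i
      · rw [he, dC_self (hQ _)]
        exact dC_nonneg (hQ _) (hQ _) hmDmem.1 hmDmem.2 (hQpair _ _)
      · have h3 : w0 i = !(w1 i) := by
          rcases Bool.eq_false_or_eq_true (w0 i) with h0 | h0 <;>
            rcases Bool.eq_false_or_eq_true (w1 i) with h4 | h4 <;>
            rw [h0, h4] at he ⊢ <;> first | rfl | exact absurd rfl he
        rw [h3]
    exact le_trans h1 (hmGmax hmDmem)
  have hpe2 : (1/2) * Real.exp (-(G mG) - r) ≤ pe := by
    calc (1/2) * Real.exp (-(G mG) - r)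
        ≤ (1/2) * Real.exp (-(D mD) - r) := by
          apply mul_le_mul_of_nonneg_left _ (by norm_num)
          apply Real.exp_le_exp.mpr
          linarith [hDG]
      _ ≤ (∑ z : Fin n → Z, if T2 z then pd q₀ z else 0)
            + (∑ z : Fin n → Z, if T2 z then 0 else pd q₁ z) := hconv2
      _ = decProb Q π.dec true w0 + decProb Q π.dec false w1 := by rw [hid0, hid1]
      _ ≤ pe := hpe2'
  -- ============ extraction from hperr ============
  have hpepos : 0 < pe := lt_of_lt_of_le (by positivity) hpe2
  have hFbig : (n:ℝ) * EStar < F mF := by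
    have hlog1 : Real.log ((1/4) * Real.exp (-(F mF) - r)) ≤ Real.log pe :=
      Real.log_le_log (by positivity) hpe1
    rw [Real.log_mul (by norm_num) (Real.exp_ne_zero _), Real.log_exp,
      show ((1:ℝ)/4) = 4⁻¹ by norm_num, Real.log_inv] at hlog1
    linarith [hperr]
  have hGbig : (n:ℝ) * EStar < G mG := by
    have hlog1 : Real.log ((1/2) * Real.exp (-(G mG) - r)) ≤ Real.log pe :=
      Real.log_le_log (by positivity) hpe2
    rw [Real.log_mul (by norm_num) (Real.exp_ne_zero _), Real.log_exp,
      show ((1:ℝ)/2) = 2⁻¹ by norm_num, Real.log_inv] at hlog1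
    have h24 : Real.log 2 ≤ Real.log 4 :=
      Real.log_le_log (by norm_num) (by norm_num)
    linarith [hperr]
  -- ============ per-letter bounds ============
  have hFle : ∀ s ∈ Set.Icc (0:ℝ) 1, F s ≤ n * max (gp s) (gp (1-s)) := by
    intro s hs
    have hmaxnn : 0 ≤ max (gp s) (gp (1-s)) :=
      le_trans (hgpnn s hs) (le_max_left _ _)
    show dC (pd p₀) (pd p₁) s ≤ n * max (gp s) (gp (1-s))
    rw [dC_pd (fun i v => (hp₀pmf i).1 v) (fun i v => (hp₁pmf i).1 v) hsuppP]
    calc ∑ i, dC (p₀ i) (p₁ i) s ≤ ∑ _i : Fin n, max (gp s) (gp (1-s)) := by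
          refine Finset.sum_le_sum fun i _ => ?_
          show dC (P (π.x false i)) (P (π.x true i)) s ≤ max (gp s) (gp (1-s))
          cases h0 : π.x false i <;> cases h1 : π.x true i
          · rw [dC_self (hP false)]; exact hmaxnn
          · exact le_max_left _ _
          · rw [show dC (P true) (P false) s = gp (1 - s) from dC_swap _ _ s]
            exact le_max_right _ _
          · rw [dC_self (hP true)]; exact hmaxnn
      _ = n * max (gp s) (gp (1-s)) := by
          rw [Finset.sum_const, Finset.card_univ, Fintype.card_fin, nsmul_eq_mul]
  have hGle : ∀ s ∈ Set.Icc (0:ℝ) 1, G s ≤ n * max (gq s) (gq (1-s)) := by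
    intro s hs
    show dC (pd ν₀) (pd q₁) s ≤ n * max (gq s) (gq (1-s))
    rw [dC_pd (fun i v => (hν₀pmf i).1 v) (fun i v => (hq₁pmf i).1 v) hsuppν]
    calc ∑ i, dC (ν₀ i) (q₁ i) s ≤ ∑ _i : Fin n, max (gq s) (gq (1-s)) := by
          refine Finset.sum_le_sum fun i _ => ?_
          show dC (Q (!(w1 i))) (Q (w1 i)) s ≤ max (gq s) (gq (1-s))
          cases h1 : w1 i
          · rw [show (!false) = true from rfl,
              show dC (Q true) (Q false) s = gq (1 - s) from dC_swap _ _ s]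
            exact le_max_right _ _
          · rw [show (!true) = false from rfl]
            exact le_max_left _ _
      _ = n * max (gq s) (gq (1-s)) := by
          rw [Finset.sum_const, Finset.card_univ, Fintype.card_fin, nsmul_eq_mul]
  have hnR : 0 < (n:ℝ) := by
    by_contra hc
    push_neg at hc
    have h0 : (n:ℝ) = 0 := le_antisymm hc (Nat.cast_nonneg n)
    have h1 := hFle mF hmFmem
    rw [h0] at h1 hFbig
    simp at h1 hFbig
    linarith
  have hψ : EStar < max (gp mF) (gp (1 - mF)) := by
    have h1 := hFle mF hmFmem
    have := lt_of_lt_of_le hFbig h1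
    exact (mul_lt_mul_iff_right₀ hnR).mp this
  have hφ : EStar < max (gq mG) (gq (1 - mG)) := by
    have h1 := hGle mG hmGmem
    have := lt_of_lt_of_le hGbig h1
    exact (mul_lt_mul_iff_right₀ hnR).mp this
  have hmFmem' : 1 - mF ∈ Set.Icc (0:ℝ) 1 := ⟨by linarith [hmFmem.2], by linarith [hmFmem.1]⟩
  have hmGmem' : 1 - mG ∈ Set.Icc (0:ℝ) 1 := ⟨by linarith [hmGmem.2], by linarith [hmGmem.1]⟩
  obtain ⟨σF, hσFmem, hσFgt⟩ : ∃ σ ∈ Set.Icc (0:ℝ) 1, EStar < gp σ := by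
    rcases lt_max_iff.mp hψ with h | h
    · exact ⟨mF, hmFmem, h⟩
    · exact ⟨1 - mF, hmFmem', h⟩
  obtain ⟨σG, hσGmem, hσGgt⟩ : ∃ σ ∈ Set.Icc (0:ℝ) 1, EStar < gq σ := by
    rcases lt_max_iff.mp hφ with h | h
    · exact ⟨mG, hmGmem, h⟩
    · exact ⟨1 - mG, hmGmem', h⟩
  -- ============ part (a) ============
  have hcontra' : ∀ u ∈ Set.Icc (0:ℝ) 1, EStar < gp u → EStar < gq u → False :=
    fun u hu h1 h2 => hcontra u hu (lt_max_iff.mpr (Or.inl h1)) (lt_max_iff.mpr (Or.inl h2))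
  have hga : gp sStar = EStar := by
    by_contra hne
    have hgt : EStar < gp sStar := lt_of_le_of_ne hE_le_gp (Ne.symm hne)
    have hqeq : gq sStar = EStar := by
      by_contra hne2
      have hgt2 : EStar < gq sStar := lt_of_le_of_ne hE_le_gq (Ne.symm hne2)
      have hlt3 : EStar < min (gp sStar) (gq sStar) := lt_min hgt hgt2
      rw [← hEmin'] at hlt3
      exact lt_irrefl _ hlt3
    exact move_lemma hgpcont hgqconc hsmem hσGmem hgt hqeq.ge hσGgt hcontra'
  have hha : gq sStar = EStar := by
    by_contra hne
    have hgt : EStar < gq sStar := lt_of_le_of_ne hE_le_gq (Ne.symm hne)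
    exact move_lemma hgqcont hgpconc hsmem hσFmem hgt hga.ge hσFgt
      (fun u hu h1 h2 => hcontra' u hu h2 h1)
  have hgp1s : gp (1 - sStar) ≤ EStar := by rw [← hga]; exact hPord
  have hgq1s : gq (1 - sStar) ≤ EStar := by rw [← hha]; exact hQord
  -- F, G values at sStar, 1 - sStar
  have hFs : F sStar ≤ n * EStar := by
    have h1 := hFle sStar hsmem
    rw [max_eq_left hPord', hga] at h1
    exact h1
  have hFs' : F (1 - sStar) ≤ n * EStar := by
    have h1 := hFle (1 - sStar) hsmem'
    rw [show 1 - (1 - sStar) = sStar by ring] at h1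
    rw [max_eq_right hPord', hga] at h1
    exact h1
  have hGs : G sStar ≤ n * EStar := by
    have h1 := hGle sStar hsmem
    rw [max_eq_left hQord', hha] at h1
    exact h1
  have hGs' : G (1 - sStar) ≤ n * EStar := by
    have h1 := hGle (1 - sStar) hsmem'
    rw [show 1 - (1 - sStar) = sStar by ring] at h1
    rw [max_eq_right hQord', hha] at h1
    exact h1
  -- the finishing move
  have hfinish : ∀ t : ℝ, (t = sStar ∨ t = 1 - sStar) →
      deriv F t * deriv G t < 0 →
      (∃ t : ℝ, (t = sStar ∨ t = 1 - sStar) ∧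
        dC' (prodDist P (π.x false)) (prodDist P (π.x true)) t *
          dC' (prodDist Q (fun i => !(w1 i))) (prodDist Q w1) t < 0 ∧
        max (dC (P false) (P true) t) (dC (P false) (P true) (1 - t)) = EStar ∧
        max (dC (Q false) (Q true) t) (dC (Q false) (Q true) (1 - t)) = EStar) := by
    intro t ht hlt
    refine ⟨t, ht, ?_, ?_, ?_⟩
    · exact hlt
    · rcases ht with h | h
      · rw [h]
        rw [show max (dC (P false) (P true) sStar) (dC (P false) (P true) (1 - sStar))
            = gp sStar from max_eq_left hPord]
        exact hga
      · rw [h, show 1 - (1 - sStar) = sStar by ring]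
        rw [show max (dC (P false) (P true) (1 - sStar)) (dC (P false) (P true) sStar)
            = gp sStar from max_eq_right hPord]
        exact hga
    · rcases ht with h | h
      · rw [h]
        rw [show max (dC (Q false) (Q true) sStar) (dC (Q false) (Q true) (1 - sStar))
            = gq sStar from max_eq_left hQord]
        exact hha
      · rw [h, show 1 - (1 - sStar) = sStar by ring]
        rw [show max (dC (Q false) (Q true) (1 - sStar)) (dC (Q false) (Q true) sStar)
            = gq sStar from max_eq_right hQord]
        exact hha
  -- ============ case analysis ============
  rcases eq_or_lt_of_le hs12 with hhalf | hslt
  · -- sStar = 1/2 : contradiction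
    exfalso
    have hg2 : gp (1/2) = EStar := by rw [← hhalf]; exact hga
    have hh2 : gq (1/2) = EStar := by rw [← hhalf]; exact hha
    have hσFne : σF ≠ 1/2 := fun hc => by rw [hc, hg2] at hσFgt; exact lt_irrefl _ hσFgt
    have hσGne : σG ≠ 1/2 := fun hc => by rw [hc, hh2] at hσGgt; exact lt_irrefl _ hσGgt
    rcases lt_or_gt_of_ne hσFne with hFL | hFR
    · rcases lt_or_gt_of_ne hσGne with hGL | hGR
      · exact confl_left hgpconc hgqconc hg2.ge hh2.ge (by norm_num) hσFmem hσGmem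
          hFL hGL hσFgt hσGgt hcontra'
      · -- σF < 1/2 < σG : mixed
        by_cases hcase : 1 - σF ≤ σG
        · have humem : 1 - σF ∈ Set.Icc (0:ℝ) 1 :=
            ⟨by linarith [hσFmem.2], by linarith [hσFmem.1]⟩
          have h1 : EStar < gp (1 - (1 - σF)) := by
            rw [show 1 - (1 - σF) = σF by ring]
            exact hσFgt
          have h2 : EStar < gq (1 - σF) :=
            conc_right hgqconc hGR (by linarith) hcase hh2.ge hσGgt
          exact hcontra (1 - σF) humem (lt_max_iff.mpr (Or.inr h1))
            (lt_max_iff.mpr (Or.inl h2))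
        · push_neg at hcase
          have h1 : EStar < gp (1 - σG) :=
            conc_left hgpconc hFL (by linarith) (by linarith) hσFgt hg2.ge
          exact hcontra σG hσGmem (lt_max_iff.mpr (Or.inr h1))
            (lt_max_iff.mpr (Or.inl hσGgt))
    · rcases lt_or_gt_of_ne hσGne with hGL | hGR
      · -- σG < 1/2 < σF : mixed, swapped
        by_cases hcase : 1 - σG ≤ σF
        · have humem : 1 - σG ∈ Set.Icc (0:ℝ) 1 :=
            ⟨by linarith [hσGmem.2], by linarith [hσGmem.1]⟩
          have h1 : EStar < gq (1 - (1 - σG)) := by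
            rw [show 1 - (1 - σG) = σG by ring]
            exact hσGgt
          have h2 : EStar < gp (1 - σG) :=
            conc_right hgpconc hFR (by linarith) hcase hg2.ge hσFgt
          exact hcontra (1 - σG) humem (lt_max_iff.mpr (Or.inl h2))
            (lt_max_iff.mpr (Or.inr h1))
        · push_neg at hcase
          have h1 : EStar < gq (1 - σF) :=
            conc_left hgqconc hGL (by linarith) (by linarith) hσGgt hh2.ge
          exact hcontra σF hσFmem (lt_max_iff.mpr (Or.inl hσFgt))
            (lt_max_iff.mpr (Or.inr h1))
      · exact confl_right hgpconc hgqconc hg2.ge hh2.ge hσFmem hσGmem hFR hGR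
          hσFgt hσGgt hcontra'
  · -- sStar < 1/2
    have hs1s : sStar < 1 - sStar := by linarith
    have hsideg : ∀ ρ ∈ Set.Icc (0:ℝ) 1, EStar < gp ρ →
        ρ < sStar ∨ (sStar < ρ ∧ ρ < 1 - sStar) := by
      intro ρ hρ hgt
      have hne1 : ρ ≠ sStar := fun hc => by rw [hc, hga] at hgt; exact lt_irrefl _ hgt
      have hne2 : ¬ (1 - sStar ≤ ρ) := by
        intro hc
        rcases eq_or_lt_of_le hc with he | hlt2
        · rw [← he] at hgt; linarith [hgp1s]
        · have := conc_right hgpconc (show sStar < ρ by linarith) hs1s hc hga.ge hgt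
          linarith [hgp1s]
      rcases lt_trichotomy ρ sStar with h | h | h
      · exact Or.inl h
      · exact absurd h hne1
      · exact Or.inr ⟨h, by push_neg at hne2; exact hne2⟩
    have hsideh : ∀ ρ ∈ Set.Icc (0:ℝ) 1, EStar < gq ρ →
        ρ < sStar ∨ (sStar < ρ ∧ ρ < 1 - sStar) := by
      intro ρ hρ hgt
      have hne1 : ρ ≠ sStar := fun hc => by rw [hc, hha] at hgt; exact lt_irrefl _ hgt
      have hne2 : ¬ (1 - sStar ≤ ρ) := by
        intro hc
        rcases eq_or_lt_of_le hc with he | hlt2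
        · rw [← he] at hgt; linarith [hgq1s]
        · have := conc_right hgqconc (show sStar < ρ by linarith) hs1s hc hha.ge hgt
          linarith [hgq1s]
      rcases lt_trichotomy ρ sStar with h | h | h
      · exact Or.inl h
      · exact absurd h hne1
      · exact Or.inr ⟨h, by push_neg at hne2; exact hne2⟩
    -- derivative helpers
    have hFder_pos : sStar < mF → mF < 1 - sStar → 0 < deriv F sStar := by
      intro h1 _
      have hs := conc_deriv_ge_slope hFconc h1 (hFd sStar)
      have hsl : 0 < (F mF - F sStar) / (mF - sStar) :=
        div_pos (by linarith [hFs, hFbig]) (by linarith)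
      rw [(hFd sStar).deriv]
      linarith
    have hFder_neg : sStar < mF → mF < 1 - sStar → deriv F (1 - sStar) < 0 := by
      intro _ h2
      have hs := conc_deriv_le_slope hFconc h2 (hFd (1 - sStar))
      have hsl : (F (1 - sStar) - F mF) / ((1 - sStar) - mF) < 0 :=
        div_neg_of_neg_of_pos (by linarith [hFs', hFbig]) (by linarith)
      rw [(hFd (1 - sStar)).deriv]
      linarith
    have hGder_pos : sStar < mG → mG < 1 - sStar → 0 < deriv G sStar := by
      intro h1 _
      have hs := conc_deriv_ge_slope hGconc h1 (hGd sStar)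
      have hsl : 0 < (G mG - G sStar) / (mG - sStar) :=
        div_pos (by linarith [hGs, hGbig]) (by linarith)
      rw [(hGd sStar).deriv]
      linarith
    have hGder_neg : sStar < mG → mG < 1 - sStar → deriv G (1 - sStar) < 0 := by
      intro _ h2
      have hs := conc_deriv_le_slope hGconc h2 (hGd (1 - sStar))
      have hsl : (G (1 - sStar) - G mG) / ((1 - sStar) - mG) < 0 :=
        div_neg_of_neg_of_pos (by linarith [hGs', hGbig]) (by linarith)
      rw [(hGd (1 - sStar)).deriv]
      linarith
    have hFder_neg_at_s : mF < sStar → deriv F sStar < 0 := by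
      intro h1
      have hs := conc_deriv_le_slope hFconc h1 (hFd sStar)
      have hsl : (F sStar - F mF) / (sStar - mF) < 0 :=
        div_neg_of_neg_of_pos (by linarith [hFs, hFbig]) (by linarith)
      rw [(hFd sStar).deriv]
      linarith
    have hFder_pos_at_1s : 1 - sStar < mF → 0 < deriv F (1 - sStar) := by
      intro h1
      have hs := conc_deriv_ge_slope hFconc h1 (hFd (1 - sStar))
      have hsl : 0 < (F mF - F (1 - sStar)) / (mF - (1 - sStar)) :=
        div_pos (by linarith [hFs', hFbig]) (by linarith)
      rw [(hFd (1 - sStar)).deriv]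
      linarith
    have hGder_neg_at_s : mG < sStar → deriv G sStar < 0 := by
      intro h1
      have hs := conc_deriv_le_slope hGconc h1 (hGd sStar)
      have hsl : (G sStar - G mG) / (sStar - mG) < 0 :=
        div_neg_of_neg_of_pos (by linarith [hGs, hGbig]) (by linarith)
      rw [(hGd sStar).deriv]
      linarith
    have hGder_pos_at_1s : 1 - sStar < mG → 0 < deriv G (1 - sStar) := by
      intro h1
      have hs := conc_deriv_ge_slope hGconc h1 (hGd (1 - sStar))
      have hsl : 0 < (G mG - G (1 - sStar)) / (mG - (1 - sStar)) :=
        div_pos (by linarith [hGs', hGbig]) (by linarith)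
      rw [(hGd (1 - sStar)).deriv]
      linarith
    -- sides of σF, σG
    rcases hsideg σF hσFmem hσFgt with hFL | hFI
    · rcases hsideh σG hσGmem hσGgt with hGL | hGI
      · exact (confl_left hgpconc hgqconc hga.ge hha.ge hsmem.2 hσFmem hσGmem
          hFL hGL hσFgt hσGgt hcontra').elim
      · -- CASE B : σF left, σG inside : G balanced, F skewed
        -- mG is inside
        have hmGin : sStar < mG ∧ mG < 1 - sStar := by
          obtain ⟨τ', hτ'mem, hτ'gt, hτ'eq⟩ :
              ∃ τ' , τ' ∈ Set.Icc (0:ℝ) 1 ∧ EStar < gq τ' ∧ (τ' = mG ∨ τ' = 1 - mG) := by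
            rcases lt_max_iff.mp hφ with h | h
            · exact ⟨mG, hmGmem, h, Or.inl rfl⟩
            · exact ⟨1 - mG, hmGmem', h, Or.inr rfl⟩
          rcases hsideh τ' hτ'mem hτ'gt with hL | hI
          · -- τ' left conflicts with σG inside? no — τ' is gq witness, σG is gq witness too!
            -- conflict needs one gp and one gq: use σF (gp, left) with τ' (gq, left)
            exact (confl_left hgpconc hgqconc hga.ge hha.ge hsmem.2 hσFmem hτ'mem
              hFL hL hσFgt hτ'gt hcontra').elim
          · rcases hτ'eq with he | he
            · rw [he] at hI; exact hI
            · rw [he] at hI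
              exact ⟨by linarith [hI.2], by linarith [hI.1]⟩
        -- mF is outside
        have hmFout : mF < sStar ∨ 1 - sStar < mF := by
          obtain ⟨ρ', hρ'mem, hρ'gt, hρ'eq⟩ :
              ∃ ρ' , ρ' ∈ Set.Icc (0:ℝ) 1 ∧ EStar < gp ρ' ∧ (ρ' = mF ∨ ρ' = 1 - mF) := by
            rcases lt_max_iff.mp hψ with h | h
            · exact ⟨mF, hmFmem, h, Or.inl rfl⟩
            · exact ⟨1 - mF, hmFmem', h, Or.inr rfl⟩
          rcases hsideg ρ' hρ'mem hρ'gt with hL | hI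
          · rcases hρ'eq with he | he
            · left; rw [← he]; exact hL
            · right; rw [show mF = 1 - ρ' by rw [he]; ring]; linarith
          · -- ρ' inside (gp) conflicts with σG inside (gq)
            exact (confl_right hgpconc hgqconc hga.ge hha.ge hρ'mem hσGmem
              hI.1 hGI.1 hρ'gt hσGgt hcontra').elim
        rcases hmFout with hmFL | hmFR
        · exact hfinish sStar (Or.inl rfl)
            (mul_neg_of_neg_of_pos (hFder_neg_at_s hmFL) (hGder_pos hmGin.1 hmGin.2))
        · exact hfinish (1 - sStar) (Or.inr rfl)
            (mul_neg_of_pos_of_neg (hFder_pos_at_1s hmFR) (hGder_neg hmGin.1 hmGin.2))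
    · rcases hsideh σG hσGmem hσGgt with hGL | hGI
      · -- CASE A : σF inside, σG left : F balanced, G skewed
        have hmFin : sStar < mF ∧ mF < 1 - sStar := by
          obtain ⟨ρ', hρ'mem, hρ'gt, hρ'eq⟩ :
              ∃ ρ' , ρ' ∈ Set.Icc (0:ℝ) 1 ∧ EStar < gp ρ' ∧ (ρ' = mF ∨ ρ' = 1 - mF) := by
            rcases lt_max_iff.mp hψ with h | h
            · exact ⟨mF, hmFmem, h, Or.inl rfl⟩
            · exact ⟨1 - mF, hmFmem', h, Or.inr rfl⟩
          rcases hsideg ρ' hρ'mem hρ'gt with hL | hI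
          · exact (confl_left hgpconc hgqconc hga.ge hha.ge hsmem.2 hρ'mem hσGmem
              hL hGL hρ'gt hσGgt hcontra').elim
          · rcases hρ'eq with he | he
            · rw [he] at hI; exact hI
            · rw [he] at hI
              exact ⟨by linarith [hI.2], by linarith [hI.1]⟩
        have hmGout : mG < sStar ∨ 1 - sStar < mG := by
          obtain ⟨τ', hτ'mem, hτ'gt, hτ'eq⟩ :
              ∃ τ' , τ' ∈ Set.Icc (0:ℝ) 1 ∧ EStar < gq τ' ∧ (τ' = mG ∨ τ' = 1 - mG) := by
            rcases lt_max_iff.mp hφ with h | h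
            · exact ⟨mG, hmGmem, h, Or.inl rfl⟩
            · exact ⟨1 - mG, hmGmem', h, Or.inr rfl⟩
          rcases hsideh τ' hτ'mem hτ'gt with hL | hI
          · rcases hτ'eq with he | he
            · left; rw [← he]; exact hL
            · right; rw [show mG = 1 - τ' by rw [he]; ring]; linarith
          · exact (confl_right hgpconc hgqconc hga.ge hha.ge hσFmem hτ'mem
              hFI.1 hI.1 hσFgt hτ'gt hcontra').elim
        rcases hmGout with hmGL | hmGR
        · exact hfinish sStar (Or.inl rfl)
            (mul_neg_of_pos_of_neg (hFder_pos hmFin.1 hmFin.2) (hGder_neg_at_s hmGL))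
        · exact hfinish (1 - sStar) (Or.inr rfl)
            (mul_neg_of_neg_of_pos (hFder_neg hmFin.1 hmFin.2) (hGder_pos_at_1s hmGR))
      · exact (confl_right hgpconc hgqconc hga.ge hha.ge hσFmem hσGmem
          hFI.1 hGI.1 hσFgt hσGgt hcontra').elim
end
end
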